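/- arXiv:2206.11034 — 5 statements merged into one kernel-verified Lean document; each statement's English description precedes it below -/
import Mathlib

section
/- Let Γ* : G → ℝ² be a minimal network and let Γ : G → ℝ² be an immersed triple junctions network with the same underlying graph G such that Γ(q) = Γ*(q) for every endpoint q of G. Then L(Γ*) ≤ L(Γ). -/
open Set
open scoped RealInnerProductSpace

noncomputable section

/-- The Euclidean plane `ℝ²`. -/
abbrev Plane : Type := EuclideanSpace ℝ (Fin 2)

/-- A topological graph on `N` edges: the quotient of `E = ⊔_{i=1}^N [0,1] × {i}` by an
equivalence relation that only identifies points of `V = ⊔_{i=1}^N {0,1} × {i}`, required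
to be connected. -/
structure TopGraph (N : ℕ) where
  rel : Setoid (unitInterval × Fin N)
  rel_vertices : ∀ x y : unitInterval × Fin N, rel.r x y → x = y ∨
    ((x.1 = 0 ∨ x.1 = 1) ∧ (y.1 = 0 ∨ y.1 = 1))
  connected : ConnectedSpace (Quotient rel)

namespace TopGraph

variable {N : ℕ}

/-- The underlying topological space of the graph. -/
abbrev space (G : TopGraph N) : Type := Quotient G.rel

/-- The canonical projection from the disjoint union of edges onto the graph. -/
def proj (G : TopGraph N) (x : unitInterval × Fin N) : G.space := Quotient.mk G.rel x

/-- The preimage (fiber) of a point of the graph under the projection. -/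
def fiber (G : TopGraph N) (p : G.space) : Set (unitInterval × Fin N) := {x | G.proj x = p}

/-- A point of `E` lying in `V`, i.e. an endpoint label of some edge. -/
def IsVertexPoint (x : unitInterval × Fin N) : Prop := x.1 = 0 ∨ x.1 = 1

/-- An endpoint of the graph: a point whose preimage lies in `V` and is a singleton. -/
def IsEndpoint (G : TopGraph N) (p : G.space) : Prop :=
  (∀ x ∈ G.fiber p, IsVertexPoint x) ∧ (G.fiber p).ncard = 1

/-- A junction of the graph: a point whose preimage lies in `V` and has at least two
elements. -/
def IsJunction (G : TopGraph N) (p : G.space) : Prop :=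
  (∀ x ∈ G.fiber p, IsVertexPoint x) ∧ 2 ≤ (G.fiber p).ncard

/-- The order of a junction: the cardinality of its preimage. -/
def order (G : TopGraph N) (p : G.space) : ℕ := (G.fiber p).ncard

/-- A subgraph of `G`: a subspace consisting of (the image in `G` of) a subset of whole
edges, with the identifications induced by `G`. -/
def IsSubgraph (G : TopGraph N) (S : Set G.space) : Prop :=
  ∃ E' : Set (Fin N), S = G.proj '' {x | x.2 ∈ E'}

end TopGraph

/-- A (C¹ immersed) network: a continuous map `Γ : G → ℝ²` whose restriction to each edge
`[0,1] × {i}` is a C¹ immersion (recorded via a map `edge i : ℝ → ℝ²` which agrees with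
`Γ` on the edge, is C¹ on `[0,1]` and has nonvanishing derivative there). -/
structure Network (N : ℕ) (G : TopGraph N) where
  toFun : G.space → Plane
  continuous_toFun : Continuous toFun
  edge : Fin N → ℝ → Plane
  edge_eq : ∀ (i : Fin N) (t : unitInterval), edge i (t : ℝ) = toFun (G.proj (t, i))
  edge_smooth : ∀ i, ContDiffOn ℝ 1 (edge i) (Icc (0:ℝ) 1)
  edge_immersed : ∀ i, ∀ t ∈ Icc (0:ℝ) 1, derivWithin (edge i) (Icc (0:ℝ) 1) t ≠ 0

namespace Network

variable {N : ℕ} {G : TopGraph N}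

/-- The length of a network: the sum of the lengths (total variations) of its edge maps. -/
def length (Γ : Network N G) : ℝ :=
  ∑ i : Fin N, (eVariationOn (Γ.edge i) (Icc (0:ℝ) 1)).toReal

/-- The inner tangent vector of the edge `x.2` at the endpoint label `x.1 ∈ {0,1}`:
`(-1)^e γ'(e)/|γ'(e)|`. -/
def innerTangent (Γ : Network N G) (x : unitInterval × Fin N) : Plane :=
  if (x.1 : ℝ) = 0 then
    ‖derivWithin (Γ.edge x.2) (Icc (0:ℝ) 1) 0‖⁻¹ • derivWithin (Γ.edge x.2) (Icc (0:ℝ) 1) 0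
  else
    -(‖derivWithin (Γ.edge x.2) (Icc (0:ℝ) 1) 1‖⁻¹ • derivWithin (Γ.edge x.2) (Icc (0:ℝ) 1) 1)

/-- A minimal network: every edge is an embedding parametrizing a nondegenerate straight
segment, distinct edges intersect only at identified endpoints, the two endpoint labels
of each edge are not identified with each other, every junction has order `3`, and at
every junction the inner tangent vectors sum to zero. -/
structure IsMinimal (Γ : Network N G) : Prop where
  straight : ∀ i, ∃ p q : Plane, p ≠ q ∧ Γ.edge i '' (Icc (0:ℝ) 1) = segment ℝ p q
  embed : ∀ i, Set.InjOn (Γ.edge i) (Icc (0:ℝ) 1)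
  intersect_only_at_identified_endpoints : ∀ i j, i ≠ j → ∀ s t : unitInterval,
    Γ.edge i (s : ℝ) = Γ.edge j (t : ℝ) → G.proj (s, i) = G.proj (t, j)
  ends_distinct : ∀ i, G.proj (0, i) ≠ G.proj (1, i)
  junctions_order_three : ∀ p, G.IsJunction p → G.order p = 3
  balanced : ∀ p, G.IsJunction p → (∑ᶠ x ∈ G.fiber p, Γ.innerTangent x) = 0

end Network

section Aux

def perp (w : Plane) : Plane := (WithLp.equiv 2 (Fin 2 → ℝ)).symm ![-(w 1), w 0]

lemma inner_perp_self (w : Plane) : ⟪w, perp w⟫ = 0 := by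
  simp [perp, PiLp.inner_apply, Fin.sum_univ_two, WithLp.equiv_symm_apply, PiLp.toLp_apply]
  ring

lemma exists_smul_of_inner_perp {w v : Plane} (hw : w ≠ 0) (h : ⟪v, perp w⟫ = 0) :
    ∃ c : ℝ, v = c • w := by
  have hw2 : w 0 ^ 2 + w 1 ^ 2 ≠ 0 := by
    intro hc
    apply hw
    have h0 : w 0 = 0 := by nlinarith [sq_nonneg (w 0), sq_nonneg (w 1)]
    have h1 : w 1 = 0 := by nlinarith [sq_nonneg (w 0), sq_nonneg (w 1)]
    ext j; fin_cases j <;> simpa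
  simp [perp, PiLp.inner_apply, Fin.sum_univ_two, WithLp.equiv_symm_apply, PiLp.toLp_apply] at h
  refine ⟨(v 0 * w 0 + v 1 * w 1) / (w 0 ^ 2 + w 1 ^ 2), ?_⟩
  ext j; fin_cases j
  · show v 0 = _ * w 0
    field_simp
    linear_combination (-(w 1)) * h
  · show v 1 = _ * w 1
    field_simp
    linear_combination (w 0) * h

lemma eVariationOn_congr_edist {α : Type*} [LinearOrder α] {E F : Type*} [PseudoEMetricSpace E]
    [PseudoEMetricSpace F] {f : α → E} {g : α → F} {s : Set α}
    (h : ∀ x ∈ s, ∀ y ∈ s, edist (f x) (f y) = edist (g x) (g y)) :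
    eVariationOn f s = eVariationOn g s := by
  unfold eVariationOn
  refine iSup_congr fun p => Finset.sum_congr rfl fun i _ => ?_
  exact h _ (p.2.2.2 _) _ (p.2.2.2 _)

lemma edge_key {γ : ℝ → Plane} (hsm : ContDiffOn ℝ 1 γ (Icc 0 1))
    (him : ∀ t ∈ Icc (0:ℝ) 1, derivWithin γ (Icc 0 1) t ≠ 0)
    {p q : Plane} (himg : γ '' Icc 0 1 ⊆ segment ℝ p q) :
    ∃ τ : Plane, ‖τ‖ = 1 ∧
      ‖derivWithin γ (Icc (0:ℝ) 1) 0‖⁻¹ • derivWithin γ (Icc (0:ℝ) 1) 0 = τ ∧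
      ‖derivWithin γ (Icc (0:ℝ) 1) 1‖⁻¹ • derivWithin γ (Icc (0:ℝ) 1) 1 = τ ∧
      (eVariationOn γ (Icc (0:ℝ) 1)).toReal ≤ ⟪τ, γ 1 - γ 0⟫ := by
  have hU : UniqueDiffOn ℝ (Icc (0:ℝ) 1) := uniqueDiffOn_Icc zero_lt_one
  set v : ℝ → Plane := fun t => derivWithin γ (Icc (0:ℝ) 1) t with hv
  have hdiff : ∀ t ∈ Icc (0:ℝ) 1, HasDerivWithinAt γ (v t) (Icc (0:ℝ) 1) t := fun t ht =>
    (hsm.differentiableOn one_ne_zero t ht).hasDerivWithinAt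
  -- every two points of the image differ by a multiple of w := q - p
  have hline : ∀ t ∈ Icc (0:ℝ) 1, ∃ b : ℝ, γ t = p + b • (q - p) := by
    intro t ht
    obtain ⟨a, b, ha, hb, hab, habq⟩ := himg ⟨t, ht, rfl⟩
    exact ⟨b, by rw [← habq]; rw [show a = 1 - b by linarith]; module⟩
  set w : Plane := q - p with hw
  by_cases hw0 : w = 0
  · -- degenerate : γ constant, contradiction with immersion
    exfalso
    have hconst : ∀ t ∈ Icc (0:ℝ) 1, γ t = p := by
      intro t ht; obtain ⟨b, hb⟩ := hline t ht; rw [hb, hw0]; simp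
    have h0 : HasDerivWithinAt γ 0 (Icc (0:ℝ) 1) 0 := by
      have := (hasDerivWithinAt_const (0:ℝ) (Icc (0:ℝ) 1) p).congr hconst (hconst 0 (by simp))
      simpa using this
    exact him 0 (by simp) (h0.derivWithin (hU 0 (by simp)))
  -- the derivative is orthogonal to perp w
  have hperp : ∀ t ∈ Icc (0:ℝ) 1, ⟪v t, perp w⟫ = 0 := by
    intro t ht
    have hF : ∀ s ∈ Icc (0:ℝ) 1, ⟪γ s, perp w⟫ = ⟪p, perp w⟫ := by
      intro s hs
      obtain ⟨b, hb⟩ := hline s hs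
      rw [hb, inner_add_left, real_inner_smul_left, inner_perp_self]
      ring
    have h1 : HasDerivWithinAt (fun s => ⟪γ s, perp w⟫) (⟪γ t, (0:Plane)⟫ + ⟪v t, perp w⟫)
        (Icc (0:ℝ) 1) t :=
      HasDerivWithinAt.inner ℝ (hdiff t ht) (hasDerivWithinAt_const t _ (perp w))
    have h2 : HasDerivWithinAt (fun s => ⟪γ s, perp w⟫) 0 (Icc (0:ℝ) 1) t := by
      have := (hasDerivWithinAt_const t (Icc (0:ℝ) 1) (⟪p, perp w⟫ : ℝ)).congr hF (hF t ht)
      simpa using this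
    have e1 := h1.derivWithin (hU t ht)
    have e2 := h2.derivWithin (hU t ht)
    rw [e2] at e1
    rw [inner_zero_right] at e1
    linarith
  -- decomposition along the unit direction
  set u : Plane := ‖w‖⁻¹ • w with hu
  have hwn : ‖w‖ ≠ 0 := norm_ne_zero_iff.mpr hw0
  have hun : ‖u‖ = 1 := by
    rw [hu, norm_smul, norm_inv, norm_norm, inv_mul_cancel₀ hwn]
  set c : ℝ → ℝ := fun t => ⟪v t, u⟫ with hcdef
  have hvc : ∀ t ∈ Icc (0:ℝ) 1, v t = c t • u := by
    intro t ht
    obtain ⟨k, hk⟩ := exists_smul_of_inner_perp hw0 (hperp t ht)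
    have : c t = k * ‖w‖ := by
      rw [hcdef]
      simp only [hk, hu, real_inner_smul_left, real_inner_smul_right,
        real_inner_self_eq_norm_sq]
      field_simp
    rw [this, hk, hu, smul_smul, mul_assoc, mul_inv_cancel₀ hwn, mul_one]
  have hc0 : ∀ t ∈ Icc (0:ℝ) 1, c t ≠ 0 := by
    intro t ht hc
    exact him t ht (by rw [show derivWithin γ (Icc (0:ℝ) 1) t = v t from rfl, hvc t ht, hc,
      zero_smul])
  have hvcont : ContinuousOn v (Icc (0:ℝ) 1) := hsm.continuousOn_derivWithin hU le_rfl
  have hccont : ContinuousOn c (Icc (0:ℝ) 1) := hvcont.inner continuousOn_const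
  set ε : ℝ := if 0 < c 0 then 1 else -1 with hε
  have hεpm : ε = 1 ∨ ε = -1 := by
    rw [hε]; split <;> simp
  have hε2 : ε * ε = 1 := by rcases hεpm with h | h <;> rw [h] <;> norm_num
  have hsign : ∀ t ∈ Icc (0:ℝ) 1, 0 < ε * c t := by
    intro t ht
    by_cases h : 0 < c 0
    · have hpos : 0 < c t := by
        by_contra hle
        have hct : c t < 0 := lt_of_le_of_ne (not_lt.mp hle) (hc0 t ht)
        have hsub : Icc (0:ℝ) t ⊆ Icc 0 1 := Icc_subset_Icc le_rfl ht.2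
        have := intermediate_value_Icc' ht.1 (hccont.mono hsub)
        obtain ⟨s, hs, hcs⟩ := this ⟨hct.le, h.le⟩
        exact hc0 s (hsub hs) hcs
      rw [hε, if_pos h, one_mul]; exact hpos
    · have hc00 : c 0 < 0 := lt_of_le_of_ne (not_lt.mp h) (hc0 0 (by simp))
      have hneg : c t < 0 := by
        by_contra hle
        have hct : 0 < c t := lt_of_le_of_ne (not_lt.mp hle) (Ne.symm (hc0 t ht))
        have hsub : Icc (0:ℝ) t ⊆ Icc 0 1 := Icc_subset_Icc le_rfl ht.2
        have := intermediate_value_Icc ht.1 (hccont.mono hsub)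
        obtain ⟨s, hs, hcs⟩ := this ⟨hc00.le, hct.le⟩
        exact hc0 s (hsub hs) hcs
      rw [hε, if_neg h]; nlinarith
  have key : ∀ t ∈ Icc (0:ℝ) 1, ‖v t‖⁻¹ • v t = ε • u := by
    intro t ht
    have hct := hc0 t ht
    have hst := hsign t ht
    rw [hvc t ht, norm_smul, hun, mul_one, smul_smul]
    congr 1
    have habs : |c t| = ε * c t := by
      rcases hεpm with h | h
      · rw [h, one_mul] at hst ⊢; exact abs_of_pos hst
      · rw [h] at hst ⊢; rw [abs_of_neg (by linarith)]; ring
    rw [Real.norm_eq_abs, habs]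
    field_simp
    rcases hεpm with h | h <;> rw [h] <;> ring
  refine ⟨ε • u, ?_, ?_, ?_, ?_⟩
  · rw [norm_smul, hun, mul_one]
    rcases hεpm with h | h <;> rw [h] <;> norm_num
  · exact key 0 (by simp)
  · exact key 1 (by simp)
  · -- length bound
    set g : ℝ → ℝ := fun t => ⟪γ t, ε • u⟫ with hg
    have hgd : ∀ t ∈ Icc (0:ℝ) 1, HasDerivWithinAt g (ε * c t) (Icc (0:ℝ) 1) t := by
      intro t ht
      have h1 := HasDerivWithinAt.inner ℝ (hdiff t ht)
        (hasDerivWithinAt_const t (Icc (0:ℝ) 1) (ε • u))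
      have : ⟪γ t, (0:Plane)⟫ + ⟪v t, ε • u⟫ = ε * c t := by
        rw [inner_zero_right, hvc t ht, real_inner_smul_left, real_inner_smul_right]
        rw [real_inner_self_eq_norm_sq, hun]
        ring
      rwa [this] at h1
    have hgmono : MonotoneOn g (Icc (0:ℝ) 1) := by
      apply monotoneOn_of_hasDerivWithinAt_nonneg (convex_Icc 0 1)
        (hsm.continuousOn.inner continuousOn_const) (f' := fun t => ε * c t)
      · intro x hx
        rw [interior_Icc] at hx ⊢
        exact (hgd x (Ioo_subset_Icc_self hx)).mono Ioo_subset_Icc_self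
      · intro x hx
        rw [interior_Icc] at hx
        exact (hsign x (Ioo_subset_Icc_self hx)).le
    have hvar : eVariationOn γ (Icc (0:ℝ) 1) = eVariationOn g (Icc (0:ℝ) 1) := by
      apply eVariationOn_congr_edist
      intro x hx y hy
      obtain ⟨bx, hbx⟩ := hline x hx
      obtain ⟨by', hby⟩ := hline y hy
      rw [edist_dist, edist_dist, dist_eq_norm, Real.dist_eq]
      congr 1
      have hγ : γ x - γ y = (bx - by') • w := by rw [hbx, hby, hw]; module
      have hgxy : g x - g y = (bx - by') * (ε * ‖w‖) := by
        rw [hg]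
        simp only
        rw [← inner_sub_left, hγ, real_inner_smul_left, real_inner_smul_right, hu,
          real_inner_smul_right, real_inner_self_eq_norm_sq]
        field_simp
      rw [hγ, hgxy, norm_smul, abs_mul, abs_mul]
      rcases hεpm with h | h <;> rw [h] <;> simp [abs_of_nonneg (norm_nonneg w)]
    have hmle := hgmono.eVariationOn_le (by simp : (0:ℝ) ∈ Icc (0:ℝ) 1)
      (by simp : (1:ℝ) ∈ Icc (0:ℝ) 1)
    rw [inter_self] at hmle
    rw [hvar]
    have h01 : g 0 ≤ g 1 := hgmono (by simp) (by simp) zero_le_one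
    have := ENNReal.toReal_le_of_le_ofReal (by linarith) hmle
    calc (eVariationOn g (Icc (0:ℝ) 1)).toReal ≤ g 1 - g 0 := this
      _ = ⟪ε • u, γ 1 - γ 0⟫ := by
          rw [hg]
          simp only
          rw [← inner_sub_left, real_inner_comm]

lemma edge_bv {γ : ℝ → Plane} (hsm : ContDiffOn ℝ 1 γ (Icc 0 1)) :
    eVariationOn γ (Icc (0:ℝ) 1) ≠ ⊤ := by
  have hU : UniqueDiffOn ℝ (Icc (0:ℝ) 1) := uniqueDiffOn_Icc zero_lt_one
  have hvcont : ContinuousOn (derivWithin γ (Icc (0:ℝ) 1)) (Icc (0:ℝ) 1) :=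
    hsm.continuousOn_derivWithin hU le_rfl
  obtain ⟨M, hM⟩ := (isCompact_Icc (a := (0:ℝ)) (b := 1)).exists_bound_of_continuousOn hvcont
  have hlip : LipschitzOnWith M.toNNReal γ (Icc (0:ℝ) 1) := by
    apply (convex_Icc (0:ℝ) 1).lipschitzOnWith_of_nnnorm_hasFDerivWithin_le
      (f' := fun t => ContinuousLinearMap.smulRight (1 : ℝ →L[ℝ] ℝ) (derivWithin γ (Icc (0:ℝ) 1) t))
    · intro x hx
      exact (hsm.differentiableOn one_ne_zero x hx).hasDerivWithinAt.hasFDerivWithinAt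
    · intro x hx
      rw [ContinuousLinearMap.nnnorm_smulRight_apply]
      have h1 : ‖(1 : ℝ →L[ℝ] ℝ)‖₊ = 1 := by
        simp [nnnorm]
      rw [h1, one_mul, ← NNReal.coe_le_coe, coe_nnnorm, Real.coe_toNNReal']
      exact (hM x hx).trans (le_max_left _ _)
  have h := hlip.comp_eVariationOn_le (mapsTo_id (Icc (0:ℝ) 1))
  have hid : eVariationOn (id : ℝ → ℝ) (Icc (0:ℝ) 1) ≤ ENNReal.ofReal 1 := by
    have := (monotoneOn_id (s := Icc (0:ℝ) 1)).eVariationOn_le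
      (by simp : (0:ℝ) ∈ Icc (0:ℝ) 1) (by simp : (1:ℝ) ∈ Icc (0:ℝ) 1)
    rw [inter_self] at this
    simpa using this
  intro htop
  rw [show γ = γ ∘ id from rfl] at htop
  rw [htop] at h
  exact (lt_irrefl ⊤ (lt_of_le_of_lt h (by
    exact lt_of_le_of_lt (mul_le_mul_right hid _) (by simp [ENNReal.mul_lt_top, ENNReal.ofReal_lt_top] )))) 


end Aux

/-- A minimal network minimizes length among immersed triple junctions
networks with the same underlying graph and the same endpoints. -/
theorem minimal_network_length_le_same_graph {N : ℕ} {G : TopGraph N}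
    (Γstar : Network N G) (hmin : Γstar.IsMinimal)
    (Γ : Network N G)
    (htriple : ∀ p, G.IsJunction p → G.order p = 3)
    (hend : ∀ q, G.IsEndpoint q → Γ.toFun q = Γstar.toFun q) :
    Γstar.length ≤ Γ.length := by
  classical
  have hkey : ∀ i : Fin N, ∃ τ : Plane, ‖τ‖ = 1 ∧
      ‖derivWithin (Γstar.edge i) (Icc (0:ℝ) 1) 0‖⁻¹ • derivWithin (Γstar.edge i) (Icc (0:ℝ) 1) 0 = τ ∧
      ‖derivWithin (Γstar.edge i) (Icc (0:ℝ) 1) 1‖⁻¹ • derivWithin (Γstar.edge i) (Icc (0:ℝ) 1) 1 = τ ∧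
      (eVariationOn (Γstar.edge i) (Icc (0:ℝ) 1)).toReal ≤
        ⟪τ, Γstar.edge i 1 - Γstar.edge i 0⟫ := by
    intro i
    obtain ⟨p, q, hpq, himg⟩ := hmin.straight i
    exact edge_key (Γstar.edge_smooth i) (Γstar.edge_immersed i) himg.subset
  choose τ hτn hτ0 hτ1 hτvar using hkey
  have hcoe0 : ((0 : unitInterval) : ℝ) = 0 := rfl
  have hcoe1 : ((1 : unitInterval) : ℝ) = 1 := rfl
  have hIT0 : ∀ i, Γstar.innerTangent (0, i) = τ i := by
    intro i
    rw [Network.innerTangent]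
    simp only [hcoe0, if_pos rfl]
    exact hτ0 i
  have hIT1 : ∀ i, Γstar.innerTangent (1, i) = -(τ i) := by
    intro i
    rw [Network.innerTangent]
    simp only [hcoe1, one_ne_zero, if_false]
    rw [hτ1 i]
  -- the function measuring the difference between the two networks
  set f : G.space → Plane := fun p' => Γstar.toFun p' - Γ.toFun p' with hf
  -- the vertex parametrization
  set vmap : Fin 2 × Fin N → unitInterval × Fin N :=
    fun x => (if x.1 = 0 then 0 else 1, x.2) with hvmap
  have h01 : (0 : unitInterval) ≠ 1 := by
    intro h
    exact zero_ne_one (α := ℝ) (congrArg Subtype.val h)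
  have hvmapinj : Function.Injective vmap := by
    rintro ⟨e, i⟩ ⟨e', i'⟩ h
    rw [Prod.ext_iff] at h
    obtain ⟨h1, h2⟩ := h
    simp only [hvmap] at h1 h2
    fin_cases e <;> fin_cases e' <;> simp_all
  have hvmapvert : ∀ x, TopGraph.IsVertexPoint (vmap x) := by
    intro x
    rw [TopGraph.IsVertexPoint, hvmap]
    by_cases h : x.1 = 0 <;> simp [h]
  set P : Fin 2 × Fin N → G.space := fun x => G.proj (vmap x) with hP
  -- the vertex sum vanishes
  have hS : ∑ x : Fin 2 × Fin N, ⟪Γstar.innerTangent (vmap x), f (P x)⟫ = 0 := by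
    rw [← Finset.sum_fiberwise_of_maps_to (g := P) (fun x _ => Finset.mem_image_of_mem P
      (Finset.mem_univ x))]
    apply Finset.sum_eq_zero
    intro p' hp'
    obtain ⟨x₀, _, hx₀⟩ := Finset.mem_image.mp hp'
    -- the fiber of p' is the image of the corresponding label set
    have hfib : G.fiber p' = vmap '' {x | P x = p'} := by
      ext y
      constructor
      · intro hy
        have hy' : G.proj y = G.proj (vmap x₀) := by
          rw [hy, ← hx₀]
        have hr := Quotient.exact hy'
        have hvy : y.1 = 0 ∨ y.1 = 1 := by
          rcases G.rel_vertices _ _ hr with h | h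
          · rw [h]; exact hvmapvert x₀
          · exact h.1
        have hvy' : vmap (if y.1 = 0 then (0 : Fin 2) else 1, y.2) = y := by
          rcases hvy with h | h
          · rw [if_pos h]
            rw [hvmap]
            simp only [if_pos rfl]
            exact Prod.ext h.symm rfl
          · rw [if_neg (by rw [h]; exact h01.symm)]
            rw [hvmap]
            simp only [one_ne_zero, if_false]
            exact Prod.ext h.symm rfl
        refine ⟨(if y.1 = 0 then (0 : Fin 2) else 1, y.2), ?_, hvy'⟩
        rw [mem_setOf_eq, hP]
        simp only
        rw [hvy']
        exact hy
      · rintro ⟨x, hx, rfl⟩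
        exact hx
    have hvert : ∀ y ∈ G.fiber p', TopGraph.IsVertexPoint y := by
      intro y hy
      rw [hfib] at hy
      obtain ⟨x, _, rfl⟩ := hy
      exact hvmapvert x
    have hfin : (G.fiber p').Finite := by
      rw [hfib]; exact (Set.toFinite _).image _
    have hne : (G.fiber p').Nonempty := ⟨vmap x₀, hx₀⟩
    have hcard : 1 ≤ (G.fiber p').ncard := by
      rw [Nat.one_le_iff_ne_zero]
      intro h
      rw [Set.ncard_eq_zero hfin] at h
      exact Set.not_nonempty_empty (h ▸ hne)
    -- relate the finset sum over the fiber to the finsum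
    have hsum : ∑ x ∈ Finset.univ.filter (fun x => P x = p'), Γstar.innerTangent (vmap x) =
        ∑ᶠ y ∈ G.fiber p', Γstar.innerTangent y := by
      rw [hfib, finsum_mem_image (Set.injOn_of_injective hvmapinj)]
      rw [← finsum_mem_coe_finset]
      congr 1
      ext x
      simp
    have hterm : ∀ x ∈ Finset.univ.filter (fun x => P x = p'), ⟪Γstar.innerTangent (vmap x),
        f (P x)⟫ = ⟪Γstar.innerTangent (vmap x), f p'⟫ := by
      intro x hx
      rw [Finset.mem_filter] at hx
      rw [hx.2]
    rw [Finset.sum_congr rfl hterm, ← sum_inner]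
    by_cases hcard1 : (G.fiber p').ncard = 1
    · -- endpoint: f vanishes
      have hf0 : f p' = 0 := by
        rw [hf]
        simp only
        rw [hend p' ⟨hvert, hcard1⟩, sub_self]
      rw [hf0, inner_zero_right]
    · -- junction: the tangents sum to zero
      have hjun : G.IsJunction p' := ⟨hvert, by omega⟩
      rw [hsum, hmin.balanced p' hjun, inner_zero_left]
  -- rewrite the vertex sum as a difference of edge sums
  have hedge0 : ∀ (Δ : Network N G) (i : Fin N), Δ.edge i 0 = Δ.toFun (G.proj (0, i)) := by
    intro Δ i
    rw [← hcoe0, Δ.edge_eq]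
  have hedge1 : ∀ (Δ : Network N G) (i : Fin N), Δ.edge i 1 = Δ.toFun (G.proj (1, i)) := by
    intro Δ i
    rw [← hcoe1, Δ.edge_eq]
  have hsplit : (∑ x : Fin 2 × Fin N, ⟪Γstar.innerTangent (vmap x), f (P x)⟫) =
      ∑ i : Fin N, (⟪τ i, f (G.proj (0, i))⟫ - ⟪τ i, f (G.proj (1, i))⟫) := by
    rw [Fintype.sum_prod_type, Fin.sum_univ_two]
    have hA : ∀ i : Fin N, ⟪Γstar.innerTangent (vmap ((0 : Fin 2), i)), f (P ((0 : Fin 2), i))⟫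
        = ⟪τ i, f (G.proj (0, i))⟫ := by
      intro i
      have hv : vmap ((0 : Fin 2), i) = (0, i) := by simp [hvmap]
      rw [hP]
      simp only
      rw [hv, hIT0]
    have hB : ∀ i : Fin N, ⟪Γstar.innerTangent (vmap ((1 : Fin 2), i)), f (P ((1 : Fin 2), i))⟫
        = -⟪τ i, f (G.proj (1, i))⟫ := by
      intro i
      have hv : vmap ((1 : Fin 2), i) = (1, i) := by
        rw [hvmap]
        simp only
        rw [if_neg (by decide)]
      rw [hP]
      simp only
      rw [hv, hIT1, inner_neg_left]
    rw [Finset.sum_congr rfl fun i _ => hA i, Finset.sum_congr rfl fun i _ => hB i,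
      Finset.sum_neg_distrib, Finset.sum_sub_distrib]
    ring
  have hzero : ∑ i : Fin N, ⟪τ i, Γstar.edge i 1 - Γstar.edge i 0⟫ =
      ∑ i : Fin N, ⟪τ i, Γ.edge i 1 - Γ.edge i 0⟫ := by
    rw [← sub_eq_zero, ← Finset.sum_sub_distrib]
    have hterm : ∀ i : Fin N, ⟪τ i, Γstar.edge i 1 - Γstar.edge i 0⟫ -
        ⟪τ i, Γ.edge i 1 - Γ.edge i 0⟫ =
        -(⟪τ i, f (G.proj (0, i))⟫ - ⟪τ i, f (G.proj (1, i))⟫) := by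
      intro i
      rw [hedge0 Γstar i, hedge1 Γstar i, hedge0 Γ i, hedge1 Γ i, hf]
      simp only [inner_sub_right]
      ring
    rw [Finset.sum_congr rfl fun i _ => hterm i, Finset.sum_neg_distrib, ← hsplit, hS, neg_zero]
  simp only [Network.length]
  calc ∑ i : Fin N, (eVariationOn (Γstar.edge i) (Icc (0:ℝ) 1)).toReal
      ≤ ∑ i : Fin N, ⟪τ i, Γstar.edge i 1 - Γstar.edge i 0⟫ :=
        Finset.sum_le_sum fun i _ => hτvar i
    _ = ∑ i : Fin N, ⟪τ i, Γ.edge i 1 - Γ.edge i 0⟫ := hzero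
    _ ≤ ∑ i : Fin N, (eVariationOn (Γ.edge i) (Icc (0:ℝ) 1)).toReal := by
        apply Finset.sum_le_sum
        intro i _
        have hfin := edge_bv (Γ.edge_smooth i)
        have hle : edist (Γ.edge i 0) (Γ.edge i 1) ≤ eVariationOn (Γ.edge i) (Icc (0:ℝ) 1) :=
          eVariationOn.edist_le _ (by simp) (by simp)
        have h2 : dist (Γ.edge i 0) (Γ.edge i 1) ≤
            (eVariationOn (Γ.edge i) (Icc (0:ℝ) 1)).toReal := by
          rw [dist_edist]
          exact ENNReal.toReal_mono hfin hle
        calc ⟪τ i, Γ.edge i 1 - Γ.edge i 0⟫ ≤ ‖τ i‖ * ‖Γ.edge i 1 - Γ.edge i 0‖ :=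
              real_inner_le_norm _ _
          _ = dist (Γ.edge i 0) (Γ.edge i 1) := by rw [hτn i, one_mul, dist_eq_norm']
          _ ≤ _ := h2
end
end

section
/- Let Γ* : G → ℝ² be a minimal network and let Γ : G → ℝ² be a map on the same underlying graph G whose restriction to each edge [0,1]×{i} is a Lipschitz map with almost everywhere non-vanishing derivative, such that every junction of G has order 3 and Γ(q) = Γ*(q) for every endpoint q of G. Then L(Γ*) ≤ L(Γ), where L(Γ) is the sum of the lengths (total variations) of the edge maps. -/
open Set

noncomputable section

/-- A Lipschitz network: a continuous map `Γ : G → ℝ²` whose restriction to each edge is a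
Lipschitz map with almost everywhere non-vanishing derivative. -/
structure LipNetwork (N : ℕ) (G : TopGraph N) where
  toFun : G.space → Plane
  continuous_toFun : Continuous toFun
  edge : Fin N → ℝ → Plane
  edge_eq : ∀ (i : Fin N) (t : unitInterval), edge i (t : ℝ) = toFun (G.proj (t, i))
  edge_lipschitz : ∀ i, ∃ K : NNReal, LipschitzOnWith K (edge i) (Icc (0:ℝ) 1)
  edge_deriv_ne : ∀ i, ∀ᵐ t ∂(MeasureTheory.volume.restrict (Icc (0:ℝ) 1)),
    derivWithin (edge i) (Icc (0:ℝ) 1) t ≠ 0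

/-- The length of a Lipschitz network: the sum of the lengths (total variations) of its
edge maps. -/
def LipNetwork.length {N : ℕ} {G : TopGraph N} (Γ : LipNetwork N G) : ℝ :=
  ∑ i : Fin N, (eVariationOn (Γ.edge i) (Icc (0:ℝ) 1)).toReal

open Filter
open scoped RealInnerProductSpace Topology

private lemma aux_deriv_nonneg {h : ℝ → ℝ} (hm : MonotoneOn h (Icc (0:ℝ) 1))
    {t : ℝ} (ht : t ∈ Icc (0:ℝ) 1) (hd : DifferentiableWithinAt ℝ h (Icc (0:ℝ) 1) t) :
    0 ≤ derivWithin h (Icc (0:ℝ) 1) t := by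
  have hder := hd.hasDerivWithinAt
  rw [hasDerivWithinAt_iff_tendsto_slope] at hder
  have hne : (𝓝[Icc (0:ℝ) 1 \ {t}] t).NeBot := by
    rw [← mem_closure_iff_nhdsWithin_neBot]
    rcases lt_or_eq_of_le ht.2 with h1 | h1
    · have hsub : Ioo t 1 ⊆ Icc (0:ℝ) 1 \ {t} := fun x hx =>
        ⟨⟨le_trans ht.1 hx.1.le, hx.2.le⟩, (ne_of_gt hx.1)⟩
      exact closure_mono hsub (by rw [closure_Ioo h1.ne]; exact ⟨le_refl t, h1.le⟩)
    · have h0t : (0:ℝ) < t := by rw [h1]; exact one_pos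
      have hsub : Ioo (0:ℝ) t ⊆ Icc (0:ℝ) 1 \ {t} := fun x hx =>
        ⟨⟨hx.1.le, le_trans hx.2.le ht.2⟩, (ne_of_lt hx.2)⟩
      exact closure_mono hsub (by rw [closure_Ioo h0t.ne]; exact ⟨h0t.le, le_refl t⟩)
  refine ge_of_tendsto hder ?_
  filter_upwards [self_mem_nhdsWithin] with x hx
  rw [slope_def_field]
  rcases lt_or_gt_of_ne (fun he : x = t => hx.2 he) with hlt | hlt
  · exact div_nonneg_iff.2 (Or.inr ⟨sub_nonpos.2 (hm hx.1 ht hlt.le), sub_nonpos.2 hlt.le⟩)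
  · exact div_nonneg (sub_nonneg.2 (hm ht hx.1 hlt.le)) (sub_nonneg.2 hlt.le)

section AuxGeneric

variable {E' : Type*} [NormedAddCommGroup E'] [InnerProductSpace ℝ E']

private lemma aux_dir {w : E'} {k : ℝ} (hk : 0 < k) :
    ‖k • w‖⁻¹ • (k • w) = ‖w‖⁻¹ • w := by
  rw [norm_smul, Real.norm_eq_abs, abs_of_pos hk, smul_smul, mul_inv,
    mul_comm k⁻¹, mul_assoc, inv_mul_cancel₀ hk.ne', mul_one]

private lemma aux_var (f : ℝ → E') (P w : E') (h : ℝ → ℝ) (hmono : MonotoneOn h (Icc (0:ℝ) 1))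
    (hrep : ∀ t ∈ Icc (0:ℝ) 1, f t = P + h t • w) :
    eVariationOn f (Icc (0:ℝ) 1) = ENNReal.ofReal ‖f 1 - f 0‖ := by
  have h0 : (0:ℝ) ∈ Icc (0:ℝ) 1 := ⟨le_refl 0, zero_le_one⟩
  have h1 : (1:ℝ) ∈ Icc (0:ℝ) 1 := ⟨zero_le_one, le_refl 1⟩
  have hsub : f 1 - f 0 = (h 1 - h 0) • w := by
    rw [hrep 1 h1, hrep 0 h0, sub_smul]; abel
  have hd : (0:ℝ) ≤ h 1 - h 0 := sub_nonneg.2 (hmono h0 h1 zero_le_one)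
  have hnorm : ‖f 1 - f 0‖ = (h 1 - h 0) * ‖w‖ := by
    rw [hsub, norm_smul, Real.norm_eq_abs, abs_of_nonneg hd]
  refine le_antisymm ?_ ?_
  · have hlip : LipschitzWith ‖w‖₊ (fun x : ℝ => P + x • w) := by
      refine LipschitzWith.of_dist_le_mul fun x y => ?_
      rw [dist_add_left, dist_eq_norm, ← sub_smul, norm_smul, Real.norm_eq_abs,
        ← Real.dist_eq, mul_comm]
      rfl
    have heq : eVariationOn f (Icc (0:ℝ) 1) =
        eVariationOn ((fun x : ℝ => P + x • w) ∘ h) (Icc (0:ℝ) 1) :=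
      eVariationOn.eq_of_eqOn fun t ht => by simp [Function.comp, hrep t ht]
    rw [heq]
    calc eVariationOn ((fun x : ℝ => P + x • w) ∘ h) (Icc (0:ℝ) 1)
        ≤ ‖w‖₊ * eVariationOn h (Icc (0:ℝ) 1) :=
          hlip.lipschitzOnWith.comp_eVariationOn_le (mapsTo_univ _ _)
      _ ≤ ‖w‖₊ * ENNReal.ofReal (h 1 - h 0) := by
          refine mul_le_mul_right ?_ _
          have := hmono.eVariationOn_le h0 h1
          rwa [inter_self] at this
      _ = ENNReal.ofReal ‖f 1 - f 0‖ := by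
          rw [← ENNReal.ofReal_coe_nnreal, coe_nnnorm, ← ENNReal.ofReal_mul (norm_nonneg w), hnorm,
            mul_comm]
  · have := eVariationOn.edist_le f h1 h0
    rwa [edist_dist, dist_eq_norm] at this

end AuxGeneric

private lemma Network.edge_key {N : ℕ} {G : TopGraph N} (Γ : Network N G) (hm : Γ.IsMinimal)
    (i : Fin N) :
    ∃ ν : Plane, ‖ν‖ = 1 ∧
      Γ.innerTangent (0, i) = ν ∧
      Γ.innerTangent (1, i) = -ν ∧
      ⟪ν, Γ.edge i 1 - Γ.edge i 0⟫ = ‖Γ.edge i 1 - Γ.edge i 0‖ ∧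
      eVariationOn (Γ.edge i) (Icc (0:ℝ) 1) = ENNReal.ofReal ‖Γ.edge i 1 - Γ.edge i 0‖ := by
  have h0 : (0:ℝ) ∈ Icc (0:ℝ) 1 := ⟨le_refl 0, zero_le_one⟩
  have h1 : (1:ℝ) ∈ Icc (0:ℝ) 1 := ⟨zero_le_one, le_refl 1⟩
  set f := Γ.edge i with hfdef
  obtain ⟨p, q, hpq, himg⟩ := hm.straight i
  have hqp : q - p ≠ 0 := sub_ne_zero.2 (Ne.symm hpq)
  have hnqp : ‖q - p‖ ≠ 0 := norm_ne_zero_iff.2 hqp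
  have hinj := hm.embed i
  have hcont : ContinuousOn f (Icc (0:ℝ) 1) := (Γ.edge_smooth i).continuousOn
  have hdiff : DifferentiableOn ℝ f (Icc (0:ℝ) 1) :=
    (Γ.edge_smooth i).differentiableOn one_ne_zero
  set c : ℝ := (‖q - p‖ ^ 2)⁻¹ with hc
  set g : ℝ → ℝ := fun t => c * ⟪q - p, f t - p⟫ with hgdef
  have hrep : ∀ t ∈ Icc (0:ℝ) 1, f t = p + g t • (q - p) := by
    intro t ht
    have hmem : f t ∈ segment ℝ p q := by
      rw [← himg]; exact mem_image_of_mem f ht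
    obtain ⟨a, b, ha, hb, hab, habeq⟩ := hmem
    have hfe : f t = p + b • (q - p) := by
      rw [← habeq]
      have haa : a = 1 - b := by linarith
      rw [haa, sub_smul, one_smul, smul_sub]
      abel
    have hge : g t = b := by
      simp only [hgdef, hfe, add_sub_cancel_left, real_inner_smul_right,
        real_inner_self_eq_norm_sq, hc]
      field_simp
    rw [hge, hfe]
  have hkd : ∀ t ∈ Icc (0:ℝ) 1, DifferentiableWithinAt ℝ g (Icc (0:ℝ) 1) t ∧
      derivWithin f (Icc (0:ℝ) 1) t = derivWithin g (Icc (0:ℝ) 1) t • (q - p) := by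
    intro t ht
    have hu : UniqueDiffWithinAt ℝ (Icc (0:ℝ) 1) t := uniqueDiffOn_Icc one_pos t ht
    have hft := (hdiff t ht).hasDerivWithinAt
    have hg1 : HasDerivWithinAt g (c * ⟪q - p, derivWithin f (Icc (0:ℝ) 1) t⟫)
        (Icc (0:ℝ) 1) t := by
      have hi := (hasDerivWithinAt_const (𝕜 := ℝ) (x := t) (s := Icc (0:ℝ) 1)
        (c := q - p)).inner ℝ (hft.sub_const p)
      simp only [inner_zero_left, add_zero] at hi
      exact hi.const_mul c
    refine ⟨hg1.differentiableWithinAt, ?_⟩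
    have hgd : derivWithin g (Icc (0:ℝ) 1) t =
        c * ⟪q - p, derivWithin f (Icc (0:ℝ) 1) t⟫ := hg1.derivWithin hu
    have hF := (hg1.smul_const (q - p)).const_add p
    have hf2 := hF.congr (fun s hs => hrep s hs) (hrep t ht)
    rw [hf2.derivWithin hu, hgd]
  have hgc : ContinuousOn g (Icc (0:ℝ) 1) :=
    continuousOn_const.mul (continuousOn_const.inner (hcont.sub continuousOn_const))
  have hginj : InjOn g (Icc (0:ℝ) 1) := fun s hs t ht hst =>
    hinj hs ht (by show f s = f t; rw [hrep s hs, hrep t ht, hst])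
  have hne10 : f 1 ≠ f 0 := fun he => one_ne_zero (hinj h1 h0 he)
  obtain ⟨w, h, hmono, hrep', hderiv', hdiff'⟩ :
      ∃ (w : Plane) (h : ℝ → ℝ), MonotoneOn h (Icc (0:ℝ) 1) ∧
        (∀ t ∈ Icc (0:ℝ) 1, f t = p + h t • w) ∧
        (∀ t ∈ Icc (0:ℝ) 1, derivWithin f (Icc (0:ℝ) 1) t =
          derivWithin h (Icc (0:ℝ) 1) t • w) ∧
        (∀ t ∈ Icc (0:ℝ) 1, DifferentiableWithinAt ℝ h (Icc (0:ℝ) 1) t) := by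
    rcases hgc.strictMonoOn_of_injOn_Icc' zero_le_one hginj with hmono | hanti
    · exact ⟨q - p, g, hmono.monotoneOn, hrep, fun t ht => (hkd t ht).2,
        fun t ht => (hkd t ht).1⟩
    · refine ⟨p - q, fun s => -g s, hanti.neg.monotoneOn, ?_, ?_,
        fun t ht => ((hkd t ht).1).neg⟩
      · intro t ht
        rw [hrep t ht, neg_smul, ← smul_neg, neg_sub]
      · intro t ht
        have hu : UniqueDiffWithinAt ℝ (Icc (0:ℝ) 1) t := uniqueDiffOn_Icc one_pos t ht
        rw [derivWithin.fun_neg, (hkd t ht).2, neg_smul, ← smul_neg, neg_sub]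
  have hw : w ≠ 0 := by
    intro hw0
    apply hne10
    rw [hrep' 1 h1, hrep' 0 h0, hw0, smul_zero, smul_zero]
  have hlt : h 0 < h 1 := by
    rcases lt_or_eq_of_le (hmono h0 h1 zero_le_one) with hlt | heq
    · exact hlt
    · exact absurd (by rw [hrep' 1 h1, hrep' 0 h0, heq]) hne10
  have hsub : f 1 - f 0 = (h 1 - h 0) • w := by
    rw [hrep' 1 h1, hrep' 0 h0, sub_smul]; abel
  have hk1 : 0 < h 1 - h 0 := sub_pos.2 hlt
  have hdirpt : ∀ t ∈ Icc (0:ℝ) 1,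
      ‖derivWithin f (Icc (0:ℝ) 1) t‖⁻¹ • derivWithin f (Icc (0:ℝ) 1) t = ‖w‖⁻¹ • w := by
    intro t ht
    have hk0 : 0 ≤ derivWithin h (Icc (0:ℝ) 1) t := aux_deriv_nonneg hmono ht (hdiff' t ht)
    have hkne : derivWithin h (Icc (0:ℝ) 1) t ≠ 0 := by
      intro hk
      apply Γ.edge_immersed i t ht
      rw [← hfdef, hderiv' t ht, hk, zero_smul]
    rw [hderiv' t ht]
    exact aux_dir (lt_of_le_of_ne hk0 (Ne.symm hkne))
  refine ⟨‖w‖⁻¹ • w, ?_, ?_, ?_, ?_, ?_⟩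
  · rw [norm_smul, norm_inv, norm_norm, inv_mul_cancel₀ (norm_ne_zero_iff.2 hw)]
  · show (if ((0 : unitInterval) : ℝ) = 0 then _ else _) = _
    rw [if_pos (show ((0 : unitInterval) : ℝ) = 0 from rfl)]
    exact hdirpt 0 h0
  · show (if ((1 : unitInterval) : ℝ) = 0 then _ else _) = _
    rw [if_neg (show ¬ ((1 : unitInterval) : ℝ) = 0 by norm_num)]
    exact neg_inj.2 (hdirpt 1 h1)
  · rw [hsub, real_inner_smul_left, real_inner_smul_right, real_inner_self_eq_norm_sq,
      norm_smul, Real.norm_eq_abs, abs_of_pos hk1]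
    have hnw : ‖w‖ ≠ 0 := norm_ne_zero_iff.2 hw
    field_simp
  · exact aux_var f p w h hmono hrep'

/-- A minimal network minimizes length among Lipschitz networks with the
same underlying graph (all of whose junctions have order `3`) and the same endpoints. -/
theorem minimal_network_length_le_lipschitz_same_graph {N : ℕ} {G : TopGraph N}
    (Γstar : Network N G) (hmin : Γstar.IsMinimal)
    (Γ : LipNetwork N G)
    (htriple : ∀ p, G.IsJunction p → G.order p = 3)
    (hend : ∀ q, G.IsEndpoint q → Γ.toFun q = Γstar.toFun q) :
    Γstar.length ≤ Γ.length := by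
  classical
  choose ν hν1 hT0 hT1 hIn hVar using fun i => Γstar.edge_key hmin i
  have h0 : (0:ℝ) ∈ Icc (0:ℝ) 1 := ⟨le_refl 0, zero_le_one⟩
  have h1 : (1:ℝ) ∈ Icc (0:ℝ) 1 := ⟨zero_le_one, le_refl 1⟩
  set D : G.space → Plane := fun x => Γ.toFun x - Γstar.toFun x with hD
  set v : Bool × Fin N → unitInterval × Fin N := fun x => (cond x.1 1 0, x.2) with hv
  have hv_inj : Function.Injective v := by
    rintro ⟨b, j⟩ ⟨b', j'⟩ hbj
    have hb1 : cond b (1:unitInterval) 0 = cond b' 1 0 := congrArg Prod.fst hbj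
    have hj : j = j' := congrArg Prod.snd hbj
    subst hj
    cases b <;> cases b' <;> first
      | rfl
      | (exfalso
         have := congrArg (fun x : unitInterval => (x : ℝ)) hb1
         norm_num at this)
  have hvert : ∀ y : unitInterval × Fin N, TopGraph.IsVertexPoint y → ∃ x, v x = y := by
    rintro ⟨t, j⟩ (ht | ht)
    · have ht' : t = 0 := ht
      rw [ht']
      exact ⟨(false, j), rfl⟩
    · have ht' : t = 1 := ht
      rw [ht']
      exact ⟨(true, j), rfl⟩
  have hzero : ∑ x : Bool × Fin N, ⟪-(Γstar.innerTangent (v x)), D (G.proj (v x))⟫ = 0 := by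
    rw [← Finset.sum_fiberwise_of_maps_to
      (t := Finset.univ.image fun x : Bool × Fin N => G.proj (v x))
      (g := fun x : Bool × Fin N => G.proj (v x))
      (fun x _ => Finset.mem_image_of_mem _ (Finset.mem_univ x))]
    refine Finset.sum_eq_zero fun p hp => ?_
    obtain ⟨x₀, -, hx₀⟩ := Finset.mem_image.1 hp
    have hfib : G.fiber p = ↑((Finset.univ.filter fun x => G.proj (v x) = p).image v) := by
      ext y
      simp only [Finset.coe_image, mem_image, Finset.mem_coe, Finset.mem_filter,
        Finset.mem_univ, true_and]
      constructor
      · intro hy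
        have hy' : G.proj y = p := hy
        have hrel : G.rel.r y (v x₀) := Quotient.exact (hy'.trans hx₀.symm)
        rcases G.rel_vertices _ _ hrel with heq | hvp
        · exact ⟨x₀, hx₀, heq.symm⟩
        · obtain ⟨x, hx⟩ := hvert y hvp.1
          exact ⟨x, by rw [hx]; exact hy', hx⟩
      · rintro ⟨x, hx1, rfl⟩
        exact hx1
    have hALL : ∀ y ∈ G.fiber p, TopGraph.IsVertexPoint y := by
      intro y hy
      rw [hfib] at hy
      simp only [Finset.coe_image, mem_image, Finset.mem_coe] at hy
      obtain ⟨x, -, rfl⟩ := hy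
      rcases x with ⟨b, j⟩
      cases b
      · left; rfl
      · right; rfl
    have hcard : (G.fiber p).ncard = (Finset.univ.filter fun x => G.proj (v x) = p).card := by
      rw [hfib, Set.ncard_coe_finset, Finset.card_image_of_injective _ hv_inj]
    have hfinsum : ∑ᶠ y ∈ G.fiber p, Γstar.innerTangent y =
        ∑ x ∈ Finset.univ.filter (fun x => G.proj (v x) = p), Γstar.innerTangent (v x) := by
      rw [hfib, finsum_mem_coe_finset, Finset.sum_image fun x _ y _ hxy => hv_inj hxy]
    have hx₀mem : x₀ ∈ Finset.univ.filter fun x : Bool × Fin N => G.proj (v x) = p :=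
      Finset.mem_filter.2 ⟨Finset.mem_univ _, hx₀⟩
    rcases le_or_gt 2 (G.fiber p).ncard with h2 | h2
    · have hjun : G.IsJunction p := ⟨hALL, h2⟩
      calc ∑ x ∈ Finset.univ.filter (fun x : Bool × Fin N => G.proj (v x) = p),
            ⟪-(Γstar.innerTangent (v x)), D (G.proj (v x))⟫
          = ∑ x ∈ Finset.univ.filter (fun x : Bool × Fin N => G.proj (v x) = p),
            ⟪-(Γstar.innerTangent (v x)), D p⟫ :=
            Finset.sum_congr rfl fun x hx => by rw [(Finset.mem_filter.1 hx).2]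
        _ = ⟪∑ x ∈ Finset.univ.filter (fun x : Bool × Fin N => G.proj (v x) = p),
            -(Γstar.innerTangent (v x)), D p⟫ := (sum_inner _ _ _).symm
        _ = 0 := by
            rw [Finset.sum_neg_distrib, ← hfinsum, hmin.balanced p hjun, neg_zero,
              inner_zero_left]
    · have hge1 : 1 ≤ (G.fiber p).ncard := by
        rw [hcard]
        exact Finset.card_pos.2 ⟨x₀, hx₀mem⟩
      have h1' : (G.fiber p).ncard = 1 := by omega
      have hDp : D p = 0 := by
        simp only [hD]
        rw [hend p ⟨hALL, h1'⟩, sub_self]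
      refine Finset.sum_eq_zero fun x hx => ?_
      rw [(Finset.mem_filter.1 hx).2, hDp, inner_zero_right]
  have hsplit : ∑ x : Bool × Fin N, ⟪-(Γstar.innerTangent (v x)), D (G.proj (v x))⟫ =
      ∑ i : Fin N, (⟪ν i, D (G.proj (1, i))⟫ - ⟪ν i, D (G.proj (0, i))⟫) := by
    rw [Fintype.sum_prod_type_right]
    refine Finset.sum_congr rfl fun i _ => ?_
    rw [Fintype.sum_bool]
    show ⟪-(Γstar.innerTangent (1, i)), D (G.proj (1, i))⟫ +
        ⟪-(Γstar.innerTangent (0, i)), D (G.proj (0, i))⟫ = _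
    rw [hT0 i, hT1 i, neg_neg, inner_neg_left]
    ring
  have hkey : ∑ i : Fin N, ⟪ν i, Γ.toFun (G.proj (1, i)) - Γ.toFun (G.proj (0, i))⟫ =
      ∑ i : Fin N, ⟪ν i, Γstar.toFun (G.proj (1, i)) - Γstar.toFun (G.proj (0, i))⟫ := by
    have h := hzero
    rw [hsplit] at h
    rw [← sub_eq_zero, ← Finset.sum_sub_distrib, ← h]
    refine Finset.sum_congr rfl fun i _ => ?_
    simp only [hD, inner_sub_right]
    ring
  have hstar_len : Γstar.length = ∑ i : Fin N, ⟪ν i, Γstar.edge i 1 - Γstar.edge i 0⟫ := by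
    refine Finset.sum_congr rfl fun i _ => ?_
    rw [hVar i, ENNReal.toReal_ofReal (norm_nonneg _)]
    exact (hIn i).symm
  have hΓ_len : ∀ i : Fin N, ⟪ν i, Γ.edge i 1 - Γ.edge i 0⟫ ≤
      (eVariationOn (Γ.edge i) (Icc (0:ℝ) 1)).toReal := by
    intro i
    obtain ⟨K, hK⟩ := Γ.edge_lipschitz i
    have hfin : eVariationOn (Γ.edge i) (Icc (0:ℝ) 1) ≠ ⊤ := by
      have hmid : MonotoneOn (id : ℝ → ℝ) (Icc (0:ℝ) 1) := fun a _ b _ hab => hab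
      have hid : eVariationOn (id : ℝ → ℝ) (Icc (0:ℝ) 1) ≤ ENNReal.ofReal (1 - 0) := by
        have := hmid.eVariationOn_le h0 h1
        rwa [inter_self] at this
      have hcomp := hK.comp_eVariationOn_le (mapsTo_id (Icc (0:ℝ) 1))
      rw [Function.comp_id] at hcomp
      have hle : eVariationOn (Γ.edge i) (Icc (0:ℝ) 1) ≤ ↑K * ENNReal.ofReal (1 - 0) :=
        hcomp.trans (mul_le_mul_right hid _)
      exact ne_top_of_le_ne_top (ENNReal.mul_ne_top ENNReal.coe_ne_top ENNReal.ofReal_ne_top) hle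
    have hedist := eVariationOn.edist_le (Γ.edge i) h1 h0
    rw [edist_dist, dist_eq_norm] at hedist
    have hnorm_le : ‖Γ.edge i 1 - Γ.edge i 0‖ ≤
        (eVariationOn (Γ.edge i) (Icc (0:ℝ) 1)).toReal := by
      have := ENNReal.toReal_mono hfin hedist
      rwa [ENNReal.toReal_ofReal (norm_nonneg _)] at this
    calc ⟪ν i, Γ.edge i 1 - Γ.edge i 0⟫ ≤ ‖ν i‖ * ‖Γ.edge i 1 - Γ.edge i 0‖ :=
          real_inner_le_norm _ _
      _ = ‖Γ.edge i 1 - Γ.edge i 0‖ := by rw [hν1 i, one_mul]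
      _ ≤ _ := hnorm_le
  have hΓ1 : ∀ i : Fin N, Γ.edge i 1 = Γ.toFun (G.proj (1, i)) := fun i => Γ.edge_eq i 1
  have hΓ0 : ∀ i : Fin N, Γ.edge i 0 = Γ.toFun (G.proj (0, i)) := fun i => Γ.edge_eq i 0
  have hΓs1 : ∀ i : Fin N, Γstar.edge i 1 = Γstar.toFun (G.proj (1, i)) :=
    fun i => Γstar.edge_eq i 1
  have hΓs0 : ∀ i : Fin N, Γstar.edge i 0 = Γstar.toFun (G.proj (0, i)) :=
    fun i => Γstar.edge_eq i 0
  calc Γstar.length = ∑ i : Fin N, ⟪ν i, Γstar.edge i 1 - Γstar.edge i 0⟫ := hstar_len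
    _ = ∑ i : Fin N, ⟪ν i, Γstar.toFun (G.proj (1, i)) - Γstar.toFun (G.proj (0, i))⟫ := by
        refine Finset.sum_congr rfl fun i _ => ?_
        rw [hΓs1 i, hΓs0 i]
    _ = ∑ i : Fin N, ⟪ν i, Γ.toFun (G.proj (1, i)) - Γ.toFun (G.proj (0, i))⟫ := hkey.symm
    _ = ∑ i : Fin N, ⟪ν i, Γ.edge i 1 - Γ.edge i 0⟫ := by
        refine Finset.sum_congr rfl fun i _ => ?_
        rw [hΓ1 i, hΓ0 i]
    _ ≤ ∑ i : Fin N, (eVariationOn (Γ.edge i) (Icc (0:ℝ) 1)).toReal :=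
        Finset.sum_le_sum fun i _ => hΓ_len i
    _ = Γ.length := rfl
end
end

section
/- There is no minimal network Γ : G → ℝ² having exactly one endpoint. (Otherwise the distance function from the image of the endpoint would not achieve a maximum on the image of the network: at a farthest point, which is either an interior point of a straight edge, the other end of an edge, or a triple junction with 120-degree angles, maximality is contradicted.) -/
open Set

noncomputable section

open RealInnerProductSpace Topology Filter

section Aux

private lemma aux_between {g : ℝ → ℝ} (hc : ContinuousOn g (Icc 0 1))
    (hinj : InjOn g (Icc 0 1)) {t : ℝ} (ht : t ∈ Ioo (0:ℝ) 1) :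
    (g 0 < g t ∧ g t < g 1) ∨ (g 1 < g t ∧ g t < g 0) := by
  have h0m : (0:ℝ) ∈ Icc (0:ℝ) 1 := ⟨le_rfl, zero_le_one⟩
  have h1m : (1:ℝ) ∈ Icc (0:ℝ) 1 := ⟨zero_le_one, le_rfl⟩
  have htm : t ∈ Icc (0:ℝ) 1 := ⟨ht.1.le, ht.2.le⟩
  have h0 : g t ≠ g 0 := fun h => ht.1.ne' (hinj htm h0m h)
  have h1 : g t ≠ g 1 := fun h => ht.2.ne (hinj htm h1m h)
  have hna : ¬ (g 0 < g t ∧ g 1 < g t) := by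
    rintro ⟨ha, hb⟩
    have hv : max (g 0) (g 1) < g t := max_lt ha hb
    obtain ⟨s₁, hs₁m, hs₁⟩ := intermediate_value_Icc ht.1.le
      (hc.mono (Icc_subset_Icc le_rfl ht.2.le))
      (⟨le_max_left _ _, hv.le⟩ : max (g 0) (g 1) ∈ Icc (g 0) (g t))
    obtain ⟨s₂, hs₂m, hs₂⟩ := intermediate_value_Icc' ht.2.le
      (hc.mono (Icc_subset_Icc ht.1.le le_rfl))
      (⟨le_max_right _ _, hv.le⟩ : max (g 0) (g 1) ∈ Icc (g 1) (g t))
    have hs₁m' : s₁ ∈ Icc (0:ℝ) 1 := ⟨hs₁m.1, hs₁m.2.trans ht.2.le⟩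
    have hs₂m' : s₂ ∈ Icc (0:ℝ) 1 := ⟨ht.1.le.trans hs₂m.1, hs₂m.2⟩
    have hss : s₁ = s₂ := hinj hs₁m' hs₂m' (hs₁.trans hs₂.symm)
    have hne : s₁ ≠ t := fun h => hv.ne (by rw [← h, hs₁])
    have : s₁ = t := le_antisymm hs₁m.2 (by rw [hss]; exact hs₂m.1)
    exact hne this
  have hnb : ¬ (g t < g 0 ∧ g t < g 1) := by
    rintro ⟨ha, hb⟩
    have hv : g t < min (g 0) (g 1) := lt_min ha hb
    obtain ⟨s₁, hs₁m, hs₁⟩ := intermediate_value_Icc' ht.1.le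
      (hc.mono (Icc_subset_Icc le_rfl ht.2.le))
      (⟨hv.le, min_le_left _ _⟩ : min (g 0) (g 1) ∈ Icc (g t) (g 0))
    obtain ⟨s₂, hs₂m, hs₂⟩ := intermediate_value_Icc ht.2.le
      (hc.mono (Icc_subset_Icc ht.1.le le_rfl))
      (⟨hv.le, min_le_right _ _⟩ : min (g 0) (g 1) ∈ Icc (g t) (g 1))
    have hs₁m' : s₁ ∈ Icc (0:ℝ) 1 := ⟨hs₁m.1, hs₁m.2.trans ht.2.le⟩
    have hs₂m' : s₂ ∈ Icc (0:ℝ) 1 := ⟨ht.1.le.trans hs₂m.1, hs₂m.2⟩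
    have hss : s₁ = s₂ := hinj hs₁m' hs₂m' (hs₁.trans hs₂.symm)
    have hne : s₁ ≠ t := fun h => hv.ne' (by rw [← h, hs₁])
    have : s₁ = t := le_antisymm hs₁m.2 (by rw [hss]; exact hs₂m.1)
    exact hne this
  rcases h0.lt_or_gt with h | h
  · right
    rcases h1.lt_or_gt with h' | h'
    · exact absurd ⟨h, h'⟩ hnb
    · exact ⟨h', h⟩
  · left
    rcases h1.lt_or_gt with h' | h'
    · exact ⟨h, h'⟩
    · exact absurd ⟨h, h'⟩ hna

private lemma aux_coord {f : ℝ → Plane} (hc : ContinuousOn f (Icc 0 1))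
    (hinj : InjOn f (Icc 0 1)) {b c : Plane} (hbc : b ≠ c)
    (himg : f '' (Icc 0 1) = segment ℝ b c) :
    ∀ t ∈ Icc (0:ℝ) 1, ∃ u : ℝ, f t = f 0 + u • (f 1 - f 0) ∧ 0 ≤ u ∧ u ≤ 1 ∧
      (t ∈ Ioo (0:ℝ) 1 → 0 < u ∧ u < 1) := by
  have hcb : c - b ≠ 0 := sub_ne_zero.mpr (Ne.symm hbc)
  have hcb2 : ‖c - b‖ ^ 2 ≠ 0 := pow_ne_zero 2 (norm_ne_zero_iff.mpr hcb)
  set S : ℝ → ℝ := fun t => ⟪f t - b, c - b⟫ / ‖c - b‖ ^ 2 with hSdef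
  have hrepr : ∀ t ∈ Icc (0:ℝ) 1, f t = b + S t • (c - b) := by
    intro t htm
    have : f t ∈ segment ℝ b c := himg ▸ mem_image_of_mem f htm
    rw [segment_eq_image'] at this
    obtain ⟨θ, _, hθ⟩ := this
    have hS : S t = θ := by
      have : f t - b = θ • (c - b) := by rw [← hθ]; exact add_sub_cancel_left b _
      rw [hSdef]
      simp only [this, real_inner_smul_left, real_inner_self_eq_norm_sq]
      field_simp
    rw [hS, ← hθ]
  have hScont : ContinuousOn S (Icc 0 1) :=
    ((hc.sub continuousOn_const).inner continuousOn_const).div_const _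
  have hSinj : InjOn S (Icc 0 1) := by
    intro s hs t ht hst
    apply hinj hs ht
    rw [hrepr s hs, hrepr t ht, hst]
  have h0m : (0:ℝ) ∈ Icc (0:ℝ) 1 := ⟨le_rfl, zero_le_one⟩
  have h1m : (1:ℝ) ∈ Icc (0:ℝ) 1 := ⟨zero_le_one, le_rfl⟩
  intro t htm
  rcases eq_or_lt_of_le htm.1 with h | hl
  · refine ⟨0, by rw [← h]; simp, le_rfl, zero_le_one, fun hIoo => absurd (h ▸ hIoo.1) (lt_irrefl _)⟩
  rcases eq_or_lt_of_le htm.2 with h | hr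
  · refine ⟨1, by rw [h]; simp, zero_le_one, le_rfl, fun hIoo => absurd (h ▸ hIoo.2) (lt_irrefl _)⟩
  have htIoo : t ∈ Ioo (0:ℝ) 1 := ⟨hl, hr⟩
  have hb := aux_between hScont hSinj htIoo
  have hne : S 1 - S 0 ≠ 0 := by
    rcases hb with ⟨h1, h2⟩ | ⟨h1, h2⟩
    · exact sub_ne_zero.mpr (h2.trans' h1).ne'
    · exact sub_ne_zero.mpr (h2.trans' h1).ne
  refine ⟨(S t - S 0) / (S 1 - S 0), ?_, ?_, ?_, fun _ => ?_⟩
  · have e1 : f t - f 0 = (S t - S 0) • (c - b) := by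
      rw [hrepr t htm, hrepr 0 h0m, sub_smul]; abel
    have e2 : f 1 - f 0 = (S 1 - S 0) • (c - b) := by
      rw [hrepr 1 h1m, hrepr 0 h0m, sub_smul]; abel
    rw [e2, smul_smul, div_mul_cancel₀ _ hne, ← e1]
    abel
  · rcases hb with ⟨h1, h2⟩ | ⟨h1, h2⟩
    · exact (div_pos (sub_pos.mpr h1) (sub_pos.mpr (h1.trans h2))).le
    · rw [show (S t - S 0) / (S 1 - S 0) = (S 0 - S t)/(S 0 - S 1) by
        rw [← neg_sub, ← neg_sub (S 0) (S 1), neg_div_neg_eq]]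
      exact (div_pos (sub_pos.mpr h2) (sub_pos.mpr (h1.trans h2))).le
  · rcases hb with ⟨h1, h2⟩ | ⟨h1, h2⟩
    · exact ((div_lt_one (sub_pos.mpr (h1.trans h2))).mpr (by linarith)).le
    · rw [show (S t - S 0) / (S 1 - S 0) = (S 0 - S t)/(S 0 - S 1) by
        rw [← neg_sub, ← neg_sub (S 0) (S 1), neg_div_neg_eq]]
      exact ((div_lt_one (sub_pos.mpr (h1.trans h2))).mpr (by linarith)).le
  · constructor
    · rcases hb with ⟨h1, h2⟩ | ⟨h1, h2⟩
      · exact div_pos (sub_pos.mpr h1) (sub_pos.mpr (h1.trans h2))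
      · rw [show (S t - S 0) / (S 1 - S 0) = (S 0 - S t)/(S 0 - S 1) by
          rw [← neg_sub, ← neg_sub (S 0) (S 1), neg_div_neg_eq]]
        exact div_pos (sub_pos.mpr h2) (sub_pos.mpr (h1.trans h2))
    · rcases hb with ⟨h1, h2⟩ | ⟨h1, h2⟩
      · exact (div_lt_one (sub_pos.mpr (h1.trans h2))).mpr (by linarith)
      · rw [show (S t - S 0) / (S 1 - S 0) = (S 0 - S t)/(S 0 - S 1) by
          rw [← neg_sub, ← neg_sub (S 0) (S 1), neg_div_neg_eq]]
        exact (div_lt_one (sub_pos.mpr (h1.trans h2))).mpr (by linarith)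

private lemma aux_deriv {f : ℝ → Plane} (hf : ContDiffOn ℝ 1 f (Icc 0 1))
    (hcoord : ∀ t ∈ Icc (0:ℝ) 1, ∃ u : ℝ, f t = f 0 + u • (f 1 - f 0) ∧ 0 ≤ u ∧ u ≤ 1)
    (hw : f 1 - f 0 ≠ 0) {e : ℝ} (he : e = 0 ∨ e = 1)
    (hd : derivWithin f (Icc 0 1) e ≠ 0) :
    ∃ lam : ℝ, 0 < lam ∧ derivWithin f (Icc 0 1) e = lam • (f 1 - f 0) := by
  have hem : e ∈ Icc (0:ℝ) 1 := by
    rcases he with h | h <;> rw [h]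
    · exact ⟨le_rfl, zero_le_one⟩
    · exact ⟨zero_le_one, le_rfl⟩
  set d := derivWithin f (Icc 0 1) e with hdd
  set w := f 1 - f 0 with hwdef
  have hder : HasDerivWithinAt f d (Icc 0 1) e :=
    ((hf.differentiableOn one_ne_zero) e hem).hasDerivWithinAt
  have htend := hasDerivWithinAt_iff_tendsto_slope.mp hder
  haveI hNB : (𝓝[Icc (0:ℝ) 1 \ {e}] e).NeBot := by
    rcases he with h | h <;> subst h
    · rw [Set.Icc_diff_left]
      exact mem_closure_iff_nhdsWithin_neBot.mp
        (by rw [closure_Ioc (zero_ne_one' ℝ)]; exact ⟨le_rfl, zero_le_one⟩)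
    · rw [Set.Icc_sdiff_right]
      exact mem_closure_iff_nhdsWithin_neBot.mp
        (by rw [closure_Ico (zero_ne_one' ℝ)]; exact ⟨zero_le_one, le_rfl⟩)
  have hslope : ∀ x ∈ Icc (0:ℝ) 1 \ {e}, ∃ ρ : ℝ, 0 ≤ ρ ∧ slope f e x = ρ • w := by
    intro x hx
    obtain ⟨u, hu, hu0, hu1⟩ := hcoord x hx.1
    rcases he with h | h <;> subst h
    · have hxpos : 0 < x := lt_of_le_of_ne hx.1.1 (Ne.symm hx.2)
      refine ⟨x⁻¹ * u, mul_nonneg (inv_nonneg.mpr hxpos.le) hu0, ?_⟩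
      rw [slope_def_module, hu]
      rw [show f 0 + u • w - f 0 = u • w by abel, smul_smul, sub_zero]
    · have hxlt : x < 1 := lt_of_le_of_ne hx.1.2 hx.2
      have hinv : (x - 1)⁻¹ ≤ 0 := inv_nonpos.mpr (by linarith)
      refine ⟨(x - 1)⁻¹ * (u - 1), by nlinarith, ?_⟩
      rw [slope_def_module, hu]
      rw [show f 0 + u • w - f 1 = (u - 1) • w by
        rw [sub_smul, one_smul, hwdef]; abel, smul_smul]
  have hclosed : IsClosed ((ℝ ∙ w : Submodule ℝ Plane) : Set Plane) :=
    Submodule.closed_of_finiteDimensional _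
  have hdspan : d ∈ (ℝ ∙ w : Submodule ℝ Plane) := by
    refine hclosed.mem_of_tendsto htend ?_
    filter_upwards [self_mem_nhdsWithin] with x hx
    obtain ⟨ρ, _, hρ⟩ := hslope x hx
    rw [hρ]
    exact Submodule.smul_mem _ _ (Submodule.mem_span_singleton_self w)
  obtain ⟨lam, hlam⟩ := Submodule.mem_span_singleton.mp hdspan
  have htend2 : Filter.Tendsto (fun x => ⟪slope f e x, w⟫)
      (𝓝[Icc (0:ℝ) 1 \ {e}] e) (𝓝 ⟪d, w⟫) := htend.inner tendsto_const_nhds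
  have hge : 0 ≤ ⟪d, w⟫ := by
    refine ge_of_tendsto htend2 ?_
    filter_upwards [self_mem_nhdsWithin] with x hx
    obtain ⟨ρ, hρ0, hρ⟩ := hslope x hx
    rw [hρ, real_inner_smul_left]
    exact mul_nonneg hρ0 real_inner_self_nonneg
  have hwn : (0:ℝ) < ‖w‖ ^ 2 := pow_pos (norm_pos_iff.mpr hw) 2
  have hinner : ⟪d, w⟫ = lam * ‖w‖ ^ 2 := by
    rw [← hlam, real_inner_smul_left, real_inner_self_eq_norm_sq]
  have hlampos : 0 < lam := by
    rcases lt_or_eq_of_le (by nlinarith : (0:ℝ) ≤ lam) with h | h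
    · exact h
    · exfalso; apply hd; rw [← hlam, ← h, zero_smul]
  exact ⟨lam, hlampos, hlam.symm⟩

private lemma aux_strict (a d e : Plane) (hde : d ≠ e) {u : ℝ} (hu0 : 0 < u) (hu1 : u < 1) :
    ‖(d + u • (e - d)) - a‖ < max ‖d - a‖ ‖e - a‖ := by
  set X := d - a with hX
  set V := e - d with hV
  have hVpos : (0:ℝ) < ‖V‖ := norm_pos_iff.mpr (sub_ne_zero.mpr (Ne.symm hde))
  have h1 : (d + u • (e - d)) - a = X + u • V := by rw [hX, hV]; abel
  have hXV : X + V = e - a := by rw [hX, hV]; abel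
  have e2 : ‖X + u • V‖ ^ 2 = ‖X‖ ^ 2 + 2 * (u * ⟪X, V⟫) + u ^ 2 * ‖V‖ ^ 2 := by
    rw [norm_add_sq_real, real_inner_smul_right, norm_smul]
    rw [mul_pow, Real.norm_eq_abs, sq_abs]
  have e3 : ‖X + V‖ ^ 2 = ‖X‖ ^ 2 + 2 * ⟪X, V⟫ + ‖V‖ ^ 2 := norm_add_sq_real X V
  rw [h1]
  rcases le_total ‖d - a‖ ‖e - a‖ with h | h
  · rw [max_eq_right h, ← hXV]
    have h' : ‖X‖ ≤ ‖X + V‖ := by rw [hXV]; exact h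
    have hsq : ‖X + u • V‖ ^ 2 < ‖X + V‖ ^ 2 := by
      nlinarith [mul_le_mul h' h' (norm_nonneg X) (norm_nonneg (X + V)),
        mul_pos (mul_pos hu0 (sub_pos.mpr hu1)) (mul_pos hVpos hVpos),
        sub_pos.mpr hu1]
    nlinarith [norm_nonneg (X + u • V), norm_nonneg (X + V), hsq]
  · rw [max_eq_left h]
    show ‖X + u • V‖ < ‖X‖
    have h' : ‖X + V‖ ≤ ‖X‖ := by rw [hXV]; exact h
    have hsq : ‖X + u • V‖ ^ 2 < ‖X‖ ^ 2 := by
      nlinarith [mul_le_mul h' h' (norm_nonneg (X + V)) (norm_nonneg X),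
        mul_pos (mul_pos hu0 (sub_pos.mpr hu1)) (mul_pos hVpos hVpos),
        sub_pos.mpr hu1]
    nlinarith [norm_nonneg (X + u • V), norm_nonneg X, hsq]

end Aux

/-- There is no minimal network with exactly one endpoint. -/
theorem no_minimal_network_with_one_endpoint {N : ℕ} {G : TopGraph N}
    (Γ : Network N G) (hmin : Γ.IsMinimal) :
    {p : G.space | G.IsEndpoint p}.ncard ≠ 1 := by
  intro hcard
  obtain ⟨p₀, hp₀⟩ := Set.ncard_eq_one.mp hcard
  set a := Γ.toFun p₀ with ha
  have hIccmem0 : (0:ℝ) ∈ Icc (0:ℝ) 1 := ⟨le_rfl, zero_le_one⟩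
  have hIccmem1 : (1:ℝ) ∈ Icc (0:ℝ) 1 := ⟨zero_le_one, le_rfl⟩
  have hPQ : ∀ j : Fin N, Γ.edge j 1 - Γ.edge j 0 ≠ 0 := by
    intro j h
    have h' : Γ.edge j 1 = Γ.edge j 0 := by rwa [sub_eq_zero] at h
    have := hmin.embed j hIccmem1 hIccmem0 h'
    norm_num at this
  have hcoord : ∀ j : Fin N, ∀ t ∈ Icc (0:ℝ) 1,
      ∃ u : ℝ, Γ.edge j t = Γ.edge j 0 + u • (Γ.edge j 1 - Γ.edge j 0) ∧ 0 ≤ u ∧ u ≤ 1 ∧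
        (t ∈ Ioo (0:ℝ) 1 → 0 < u ∧ u < 1) := by
    intro j
    obtain ⟨b, c, hbc, himg⟩ := hmin.straight j
    exact aux_coord (Γ.edge_smooth j).continuousOn (hmin.embed j) hbc himg
  -- the compact image
  set K : Set Plane := Set.range (Γ.toFun ∘ G.proj) with hKdef
  have hKcomp : IsCompact K :=
    isCompact_range (Γ.continuous_toFun.comp continuous_quot_mk)
  have hmemK : ∀ (j : Fin N) (t : unitInterval), Γ.edge j (t : ℝ) ∈ K := by
    intro j t
    rw [Γ.edge_eq]
    exact ⟨(t, j), rfl⟩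
  have haK : a ∈ K := by
    obtain ⟨y₀, hy₀⟩ := Quot.exists_rep p₀
    exact ⟨y₀, by simp only [Function.comp_apply]; rw [show G.proj y₀ = p₀ from hy₀, ha]⟩
  obtain ⟨q, hqK, hqmax'⟩ := hKcomp.exists_isMaxOn ⟨a, haK⟩
    ((continuous_id.sub continuous_const).norm.continuousOn :
      ContinuousOn (fun x : Plane => ‖x - a‖) K)
  have hqmax : ∀ y ∈ K, ‖y - a‖ ≤ ‖q - a‖ := fun y hy => isMaxOn_iff.mp hqmax' y hy
  obtain ⟨x₀, hx₀⟩ := hqK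
  set p : G.space := G.proj x₀ with hpdef
  have hpq : Γ.toFun p = q := hx₀
  -- the maximum is attained at parameter 0 or 1 on each edge through it
  have Amax : ∀ (j : Fin N) (t : unitInterval), Γ.edge j (t : ℝ) = q →
      (t : ℝ) = 0 ∨ (t : ℝ) = 1 := by
    intro j t hEq
    by_contra hcon
    push_neg at hcon
    have htIoo : (t : ℝ) ∈ Ioo (0:ℝ) 1 :=
      ⟨lt_of_le_of_ne t.2.1 (Ne.symm hcon.1), lt_of_le_of_ne t.2.2 hcon.2⟩
    obtain ⟨u, hrep, _, _, hstrict⟩ := hcoord j (t : ℝ) t.2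
    obtain ⟨hu0, hu1⟩ := hstrict htIoo
    have h0ne1 : Γ.edge j 0 ≠ Γ.edge j 1 := by
      intro h
      have := hmin.embed j hIccmem0 hIccmem1 h
      norm_num at this
    have hlt := aux_strict a (Γ.edge j 0) (Γ.edge j 1) h0ne1 hu0 hu1
    rw [← hrep, hEq] at hlt
    have hm0 : ‖Γ.edge j 0 - a‖ ≤ ‖q - a‖ := hqmax _ (by simpa using hmemK j 0)
    have hm1 : ‖Γ.edge j 1 - a‖ ≤ ‖q - a‖ := hqmax _ (by simpa using hmemK j 1)
    exact absurd hlt (not_lt.mpr (max_le hm0 hm1))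
  have hfibq : ∀ x ∈ G.fiber p, Γ.edge x.2 (x.1 : ℝ) = q := by
    rintro ⟨t, j⟩ hx
    rw [Γ.edge_eq]
    rw [show G.proj (t, j) = p from hx, hpq]
  have Avert : ∀ x ∈ G.fiber p, TopGraph.IsVertexPoint x := by
    rintro ⟨t, j⟩ hx
    rcases Amax j t (hfibq _ hx) with h | h
    · exact Or.inl (Subtype.ext h)
    · exact Or.inr (Subtype.ext h)
  have hfib_fin : (G.fiber p).Finite := by
    apply Set.Finite.subset
      (Set.Finite.prod (Set.Finite.insert (0 : unitInterval) (Set.finite_singleton 1))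
        (Set.finite_univ : (Set.univ : Set (Fin N)).Finite))
    intro x hx
    refine Set.mem_prod.mpr ⟨?_, Set.mem_univ _⟩
    rcases Avert x hx with h | h
    · rw [h]; exact Set.mem_insert _ _
    · rw [h]; exact Set.mem_insert_of_mem _ rfl
  have hx₀fib : x₀ ∈ G.fiber p := rfl
  -- every inner tangent at p points towards another point of the image
  have Key : ∀ x ∈ G.fiber p, ∃ (ρ : ℝ) (w : Plane),
      0 < ρ ∧ w ∈ K ∧ w ≠ q ∧ Γ.innerTangent x = ρ • (w - q) := by
    rintro ⟨t, j⟩ hx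
    have hq' : Γ.edge j (t : ℝ) = q := hfibq _ hx
    have hcj : ∀ s ∈ Icc (0:ℝ) 1,
        ∃ u : ℝ, Γ.edge j s = Γ.edge j 0 + u • (Γ.edge j 1 - Γ.edge j 0) ∧ 0 ≤ u ∧ u ≤ 1 :=
      fun s hs => (hcoord j s hs).imp fun u hu => ⟨hu.1, hu.2.1, hu.2.2.1⟩
    rcases Avert _ hx with h | h
    · -- t = 0
      have ht0 : (t : ℝ) = 0 := by rw [show t = (0 : unitInterval) from h]; rfl
      have hq0 : Γ.edge j 0 = q := by rw [← ht0]; exact hq'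
      obtain ⟨lam, hlam, hdeq⟩ := aux_deriv (Γ.edge_smooth j) hcj (hPQ j)
        (Or.inl rfl) (Γ.edge_immersed j 0 hIccmem0)
      have hdn : (0:ℝ) < ‖derivWithin (Γ.edge j) (Icc (0:ℝ) 1) 0‖ :=
        norm_pos_iff.mpr (Γ.edge_immersed j 0 hIccmem0)
      refine ⟨‖derivWithin (Γ.edge j) (Icc (0:ℝ) 1) 0‖⁻¹ * lam, Γ.edge j 1,
        mul_pos (inv_pos.mpr hdn) hlam, by simpa using hmemK j 1, ?_, ?_⟩
      · intro hcontr
        rw [← hq0] at hcontr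
        have := hmin.embed j hIccmem1 hIccmem0 hcontr
        norm_num at this
      · show Γ.innerTangent (t, j) = _
        simp only [Network.innerTangent]
        rw [if_pos ht0, ← hq0]
        rw [hdeq, smul_smul]
    · -- t = 1
      have ht1 : (t : ℝ) = 1 := by rw [show t = (1 : unitInterval) from h]; rfl
      have hq1 : Γ.edge j 1 = q := by rw [← ht1]; exact hq'
      obtain ⟨lam, hlam, hdeq⟩ := aux_deriv (Γ.edge_smooth j) hcj (hPQ j)
        (Or.inr rfl) (Γ.edge_immersed j 1 hIccmem1)
      have hdn : (0:ℝ) < ‖derivWithin (Γ.edge j) (Icc (0:ℝ) 1) 1‖ :=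
        norm_pos_iff.mpr (Γ.edge_immersed j 1 hIccmem1)
      refine ⟨‖derivWithin (Γ.edge j) (Icc (0:ℝ) 1) 1‖⁻¹ * lam, Γ.edge j 0,
        mul_pos (inv_pos.mpr hdn) hlam, by simpa using hmemK j 0, ?_, ?_⟩
      · intro hcontr
        rw [← hq1] at hcontr
        have := hmin.embed j hIccmem0 hIccmem1 hcontr
        norm_num at this
      · show Γ.innerTangent (t, j) = _
        simp only [Network.innerTangent]
        rw [if_neg (by rw [ht1]; norm_num), ← hq1]
        rw [hdeq, smul_smul, ← smul_neg, neg_sub]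
  -- maximality gives a strictly negative inner product with each inner tangent
  have hterm : ∀ x ∈ G.fiber p, ⟪q - a, Γ.innerTangent x⟫ < 0 ∨ q = a := by
    intro x hx
    obtain ⟨ρ, w, hρ, hwK, hwne, hT⟩ := Key x hx
    by_cases hqa : q = a
    · exact Or.inr hqa
    left
    have hwle : ‖w - a‖ ≤ ‖q - a‖ := hqmax w hwK
    have hexp : ‖w - a‖ ^ 2 = ‖q - a‖ ^ 2 + 2 * ⟪q - a, w - q⟫ + ‖w - q‖ ^ 2 := by
      rw [show w - a = (q - a) + (w - q) by abel, norm_add_sq_real]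
    have hwq : (0:ℝ) < ‖w - q‖ := norm_pos_iff.mpr (sub_ne_zero.mpr hwne)
    have hip : ⟪q - a, w - q⟫ < 0 := by
      nlinarith [norm_nonneg (w - a), norm_nonneg (q - a),
        mul_le_mul hwle hwle (norm_nonneg _) (norm_nonneg _)]
    rw [hT, real_inner_smul_right]
    exact mul_neg_of_pos_of_neg hρ hip
  have hnc : 0 < (G.fiber p).ncard := (Set.ncard_pos hfib_fin).mpr ⟨x₀, hx₀fib⟩
  rcases Nat.lt_or_ge (G.fiber p).ncard 2 with hlt | hge
  · -- p is an endpoint, hence p = p₀ and q = a; contradiction with the far end of the edge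
    have h1 : (G.fiber p).ncard = 1 := by omega
    have hpend : G.IsEndpoint p := ⟨Avert, h1⟩
    have hpp₀ : p = p₀ := by
      have hmem : p ∈ {p : G.space | G.IsEndpoint p} := hpend
      rw [hp₀] at hmem
      exact hmem
    have hqa : q = a := by rw [← hpq, hpp₀]
    obtain ⟨ρ, w, hρ, hwK, hwne, _⟩ := Key x₀ hx₀fib
    have hle : ‖w - a‖ ≤ ‖q - a‖ := hqmax w hwK
    rw [hqa, sub_self, norm_zero] at hle
    have : w = a := by
      have := le_antisymm hle (norm_nonneg _)
      rwa [norm_eq_zero, sub_eq_zero] at this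
    exact hwne (this.trans hqa.symm)
  · -- p is a junction: the balance condition is violated
    have hj : G.IsJunction p := ⟨Avert, hge⟩
    have hqa : q ≠ a := by
      intro hqa
      -- then p would be identified with the endpoint p₀, impossible since ncard ≥ 2
      obtain ⟨y₀, hy₀⟩ := Quot.exists_rep p₀
      have hp₀end : G.IsEndpoint p₀ := by
        have : p₀ ∈ {p : G.space | G.IsEndpoint p} := by rw [hp₀]; exact rfl
        exact this
      have hy₀fib : y₀ ∈ G.fiber p₀ := hy₀
      have hy₀v : TopGraph.IsVertexPoint y₀ := hp₀end.1 y₀ hy₀fib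
      obtain ⟨t, j⟩ := x₀
      obtain ⟨s, i⟩ := y₀
      have hEq : Γ.edge j (t : ℝ) = Γ.edge i (s : ℝ) := by
        rw [hfibq _ hx₀fib, hqa, ha, Γ.edge_eq, show G.proj (s, i) = p₀ from hy₀fib]
      have hpp : p = p₀ := by
        by_cases hij : j = i
        · subst hij
          have := hmin.embed j t.2 s.2 hEq
          have hts : t = s := Subtype.ext this
          rw [hpdef, ← hy₀, hts]
          rfl
        · have := hmin.intersect_only_at_identified_endpoints j i hij t s hEq
          rw [hpdef, ← hy₀]
          exact this
      rw [hpp] at hge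
      rw [hp₀end.2] at hge
      omega
    have hbal := hmin.balanced p hj
    rw [← Set.Finite.coe_toFinset hfib_fin, finsum_mem_coe_finset] at hbal
    have hzero : (0:ℝ) = ∑ x ∈ hfib_fin.toFinset, ⟪q - a, Γ.innerTangent x⟫ := by
      rw [← inner_sum, hbal, inner_zero_right]
    have hneg : ∑ x ∈ hfib_fin.toFinset, ⟪q - a, Γ.innerTangent x⟫ < 0 := by
      refine Finset.sum_neg (fun x hx => ?_) ⟨x₀, hfib_fin.mem_toFinset.mpr hx₀fib⟩
      rcases hterm x (hfib_fin.mem_toFinset.mp hx) with h | h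
      · exact h
      · exact absurd h hqa
    exact (ne_of_lt hneg) hzero.symm
end
end

section
/- There is no minimal network Γ : G → ℝ² having exactly two endpoints and at least one junction. Equivalently, every minimal network with exactly two endpoints consists of a single straight segment. -/
open Set

noncomputable section

namespace NoMinAux
set_option maxHeartbeats 1000000

lemma Plane.ext' {x y : Plane} (h0 : x 0 = y 0) (h1 : x 1 = y 1) : x = y := by
  apply PiLp.ext; intro j; fin_cases j <;> assumption

lemma plane_comp_pos {u : Plane} (hu : u ≠ 0) : 0 < u 0 * u 0 + u 1 * u 1 := by
  have : u 0 ≠ 0 ∨ u 1 ≠ 0 := by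
    by_contra hc; push_neg at hc
    exact hu (Plane.ext' (by simp [hc.1]) (by simp [hc.2]))
  rcases this with h | h <;>
    nlinarith [mul_self_nonneg (u 0), mul_self_nonneg (u 1), mul_self_pos.2 h]

lemma det_parallel {u a : Plane} (hu : u ≠ 0) (h : u 0 * a 1 - u 1 * a 0 = 0) :
    ∃ c : ℝ, a = c • u := by
  have hu' : u 0 ≠ 0 ∨ u 1 ≠ 0 := by
    by_contra hc; push_neg at hc
    exact hu (Plane.ext' (by simp [hc.1]) (by simp [hc.2]))
  rcases hu' with h0 | h1
  · refine ⟨a 0 / u 0, Plane.ext' ?_ ?_⟩ <;>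
      simp only [PiLp.smul_apply, smul_eq_mul] <;> field_simp <;> linarith
  · refine ⟨a 1 / u 1, Plane.ext' ?_ ?_⟩ <;>
      simp only [PiLp.smul_apply, smul_eq_mul] <;> field_simp <;> linarith

lemma normalize_smul_pos {a b : Plane} {r : ℝ} (hr : 0 < r) (hb : b ≠ 0) (h : a = r • b) :
    ‖a‖⁻¹ • a = ‖b‖⁻¹ • b := by
  subst h
  rw [norm_smul, Real.norm_eq_abs, abs_of_pos hr, smul_smul, mul_inv]
  congr 1
  have hbn : ‖b‖ ≠ 0 := norm_ne_zero_iff.2 hb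
  field_simp

variable {N : ℕ} {G : TopGraph N}

/-- the parallel-derivative lemma -/
lemma edge_parallel (Γ : Network N G) (i : Fin N) (p q : Plane) (hpq : p ≠ q)
    (himg : Γ.edge i '' (Icc (0:ℝ) 1) = segment ℝ p q) :
    ∀ t ∈ Icc (0:ℝ) 1, ∃ c : ℝ, c ≠ 0 ∧
      derivWithin (Γ.edge i) (Icc (0:ℝ) 1) t = c • (q - p) := by
  have hUD : UniqueDiffOn ℝ (Icc (0:ℝ) 1) := uniqueDiffOn_Icc one_pos
  set d : ℝ → Plane := derivWithin (Γ.edge i) (Icc (0:ℝ) 1) with hd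
  have hderiv : ∀ t ∈ Icc (0:ℝ) 1, HasDerivWithinAt (Γ.edge i) (d t) (Icc (0:ℝ) 1) t :=
    fun t ht => ((Γ.edge_smooth i).differentiableOn one_ne_zero t ht).hasDerivWithinAt
  set u : Plane := q - p with hu'
  have hu : u ≠ 0 := sub_ne_zero.2 (Ne.symm hpq)
  have hmem : ∀ t ∈ Icc (0:ℝ) 1, ∃ s ∈ Icc (0:ℝ) 1, Γ.edge i t = p + s • u := by
    intro t ht
    have h1 : Γ.edge i t ∈ segment ℝ p q := himg ▸ mem_image_of_mem _ ht
    rw [segment_eq_image'] at h1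
    obtain ⟨s, hs, h⟩ := h1
    exact ⟨s, hs, h.symm⟩
  set φ : Plane →L[ℝ] ℝ := (-(u 1)) • EuclideanSpace.proj (0:Fin 2)
      + (u 0) • EuclideanSpace.proj 1 with hφdef
  have hφ : ∀ x : Plane, φ x = -(u 1) * x 0 + u 0 * x 1 := by
    intro x; simp [hφdef]
  have hφu : φ u = 0 := by rw [hφ]; ring
  have hφconst : ∀ t ∈ Icc (0:ℝ) 1, φ (Γ.edge i t) = φ p := by
    intro t ht
    obtain ⟨s, hs, he⟩ := hmem t ht
    rw [he, map_add, map_smul, hφu]; simp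
  have hφd : ∀ t ∈ Icc (0:ℝ) 1, φ (d t) = 0 := by
    intro t ht
    have h1 : HasDerivWithinAt (fun s => φ (Γ.edge i s)) (φ (d t)) (Icc (0:ℝ) 1) t :=
      (φ.hasFDerivAt).comp_hasDerivWithinAt t (hderiv t ht)
    have h2 : HasDerivWithinAt (fun s => φ (Γ.edge i s)) 0 (Icc (0:ℝ) 1) t :=
      (hasDerivWithinAt_const t _ (φ p)).congr (fun s hs => hφconst s hs) (hφconst t ht)
    exact (h1.derivWithin (hUD t ht)).symm.trans (h2.derivWithin (hUD t ht))
  intro t ht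
  obtain ⟨c, hc⟩ := det_parallel hu (by have h3 := hφd t ht; rw [hφ] at h3; linarith)
  refine ⟨c, fun h0 => Γ.edge_immersed i t ht ?_, hc⟩
  rw [← hd] at *
  rw [hc, h0, zero_smul]

/-- main per-edge structural lemma -/
lemma edge_struct (Γ : Network N G) (hmin : Γ.IsMinimal) (i : Fin N) :
    ∃ (w : Plane) (L : ℝ), ‖w‖ = 1 ∧ 0 < L ∧
      Γ.innerTangent ((0 : unitInterval), i) = w ∧
      Γ.innerTangent ((1 : unitInterval), i) = -w ∧
      Γ.edge i 1 = Γ.edge i 0 + L • w ∧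
      ∀ t ∈ Icc (0:ℝ) 1, Γ.edge i t ∈ segment ℝ (Γ.edge i 0) (Γ.edge i 1) := by
  have hUD : UniqueDiffOn ℝ (Icc (0:ℝ) 1) := uniqueDiffOn_Icc one_pos
  set d : ℝ → Plane := derivWithin (Γ.edge i) (Icc (0:ℝ) 1) with hd
  have hderiv : ∀ t ∈ Icc (0:ℝ) 1, HasDerivWithinAt (Γ.edge i) (d t) (Icc (0:ℝ) 1) t :=
    fun t ht => ((Γ.edge_smooth i).differentiableOn one_ne_zero t ht).hasDerivWithinAt
  have hdcont : ContinuousOn d (Icc (0:ℝ) 1) :=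
    (Γ.edge_smooth i).continuousOn_derivWithin hUD le_rfl
  obtain ⟨p, q, hpq, himg⟩ := hmin.straight i
  -- the main argument, assuming the direction is positively oriented
  have key : ∀ P Q : Plane, P ≠ Q → Γ.edge i '' (Icc (0:ℝ) 1) = segment ℝ P Q →
      (∀ t ∈ Icc (0:ℝ) 1, 0 < (Q - P) 0 * d t 0 + (Q - P) 1 * d t 1) →
      ∃ (w : Plane) (L : ℝ), ‖w‖ = 1 ∧ 0 < L ∧
      Γ.innerTangent ((0 : unitInterval), i) = w ∧
      Γ.innerTangent ((1 : unitInterval), i) = -w ∧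
      Γ.edge i 1 = Γ.edge i 0 + L • w ∧
      ∀ t ∈ Icc (0:ℝ) 1, Γ.edge i t ∈ segment ℝ (Γ.edge i 0) (Γ.edge i 1) := by
    intro P Q hPQ himg' hpos
    set u : Plane := Q - P with hu'
    have hu : u ≠ 0 := sub_ne_zero.2 (Ne.symm hPQ)
    set ψ : Plane →L[ℝ] ℝ := (u 0) • EuclideanSpace.proj (0:Fin 2)
        + (u 1) • EuclideanSpace.proj 1 with hψdef
    have hψ : ∀ x : Plane, ψ x = u 0 * x 0 + u 1 * x 1 := by
      intro x; simp [hψdef]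
    have hψu : 0 < ψ u := by rw [hψ]; exact plane_comp_pos hu
    have hmem : ∀ t ∈ Icc (0:ℝ) 1, ∃ s ∈ Icc (0:ℝ) 1, Γ.edge i t = P + s • u := by
      intro t ht
      have h1 : Γ.edge i t ∈ segment ℝ P Q := himg' ▸ mem_image_of_mem _ ht
      rw [segment_eq_image'] at h1
      obtain ⟨s, hs, h⟩ := h1
      exact ⟨s, hs, h.symm⟩
    have hpar : ∀ t ∈ Icc (0:ℝ) 1, ∃ c : ℝ, 0 < c ∧ d t = c • u := by
      intro t ht
      obtain ⟨c, hc0, hc⟩ := edge_parallel Γ i P Q hPQ himg' t ht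
      refine ⟨c, ?_, hc⟩
      have h5 := hpos t ht
      have hdt : d t = c • (Q - P) := hc
      rw [hdt] at h5
      simp only [PiLp.smul_apply, smul_eq_mul] at h5
      nlinarith [plane_comp_pos hu]
    -- derivative of ψ ∘ edge is ψ (d t) > 0 : strict mono
    have hmono : StrictMonoOn (fun t => ψ (Γ.edge i t)) (Icc (0:ℝ) 1) := by
      apply strictMonoOn_of_hasDerivWithinAt_pos (convex_Icc (0:ℝ) 1)
        (ψ.continuous.comp_continuousOn (Γ.edge_smooth i).continuousOn)
        (f' := fun t => ψ (d t))
      · intro x hx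
        rw [interior_Icc] at hx ⊢
        exact ((ψ.hasFDerivAt).comp_hasDerivWithinAt x
          (hderiv x (Ioo_subset_Icc_self hx))).mono Ioo_subset_Icc_self
      · intro x hx
        rw [interior_Icc] at hx
        obtain ⟨c, hc0, hc⟩ := hpar x (Ioo_subset_Icc_self hx)
        rw [hc, map_smul, smul_eq_mul]
        exact mul_pos hc0 hψu
    have h0I : (0:ℝ) ∈ Icc (0:ℝ) 1 := ⟨le_rfl, zero_le_one⟩
    have h1I : (1:ℝ) ∈ Icc (0:ℝ) 1 := ⟨zero_le_one, le_rfl⟩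
    obtain ⟨c₀, hc₀, hd0⟩ := hpar 0 h0I
    obtain ⟨c₁, hc₁, hd1⟩ := hpar 1 h1I
    have hd0ne : d 0 ≠ 0 := fun h => Γ.edge_immersed i 0 h0I (hd ▸ h)
    have hd1ne : d 1 ≠ 0 := fun h => Γ.edge_immersed i 1 h1I (hd ▸ h)
    set w : Plane := ‖d 0‖⁻¹ • d 0 with hwdef
    have hwnorm : ‖w‖ = 1 := by
      rw [hwdef, norm_smul, norm_inv, norm_norm,
        inv_mul_cancel₀ (norm_ne_zero_iff.2 hd0ne)]
    have hτ0 : Γ.innerTangent ((0 : unitInterval), i) = w := by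
      simp [Network.innerTangent, hwdef, hd]
    have hτ1 : Γ.innerTangent ((1 : unitInterval), i) = -w := by
      have : ‖d 1‖⁻¹ • d 1 = ‖d 0‖⁻¹ • d 0 := by
        apply normalize_smul_pos (r := c₁ * c₀⁻¹) (by positivity) hd0ne
        rw [hd1, hd0, smul_smul]
        congr 1
        field_simp
      simp only [Network.innerTangent]
      rw [if_neg (by norm_num)]
      rw [← hd, this, hwdef]
    -- endpoint parameters
    obtain ⟨s0, hs0I, he0⟩ := hmem 0 h0I
    obtain ⟨s1, hs1I, he1⟩ := hmem 1 h1I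
    have hgval : ∀ {t s : ℝ}, Γ.edge i t = P + s • u → ψ (Γ.edge i t) = ψ P + s * ψ u := by
      intro t s he
      rw [he, map_add, map_smul, smul_eq_mul]
    have hg01 : ψ (Γ.edge i 0) < ψ (Γ.edge i 1) := hmono h0I h1I one_pos
    have hs01 : s0 < s1 := by
      rw [hgval he0, hgval he1] at hg01
      nlinarith
    -- w = k • u
    have hwk : w = (‖d 0‖⁻¹ * c₀) • u := by rw [hwdef, hd0, smul_smul]
    have hk : 0 < ‖d 0‖⁻¹ * c₀ := by
      have := norm_pos_iff.2 hd0ne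
      positivity
    set k : ℝ := ‖d 0‖⁻¹ * c₀ with hkdef
    set L : ℝ := (s1 - s0) * k⁻¹ with hLdef
    have hL : 0 < L := by
      apply mul_pos (by linarith)
      exact inv_pos.2 hk
    have hLw : L • w = (s1 - s0) • u := by
      rw [hwk, smul_smul, hLdef]
      congr 1
      field_simp
    have hedge10 : Γ.edge i 1 = Γ.edge i 0 + L • w := by
      rw [he0, he1, hLw, sub_smul]
      abel
    refine ⟨w, L, hwnorm, hL, hτ0, hτ1, hedge10, ?_⟩
    intro t ht
    obtain ⟨st, hstI, het⟩ := hmem t ht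
    have hg0t : ψ (Γ.edge i 0) ≤ ψ (Γ.edge i t) := hmono.monotoneOn h0I ht ht.1
    have hgt1 : ψ (Γ.edge i t) ≤ ψ (Γ.edge i 1) := hmono.monotoneOn ht h1I ht.2
    rw [hgval he0, hgval het] at hg0t
    rw [hgval het, hgval he1] at hgt1
    have hs0t : s0 ≤ st := by nlinarith
    have hst1 : st ≤ s1 := by nlinarith
    rw [segment_eq_image']
    refine ⟨(st - s0) / (s1 - s0), ⟨div_nonneg (by linarith) (by linarith), ?_⟩, ?_⟩
    · rw [div_le_one (by linarith)]; linarith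
    · show Γ.edge i 0 + ((st - s0) / (s1 - s0)) • (Γ.edge i 1 - Γ.edge i 0) = Γ.edge i t
      have hdiff : Γ.edge i 1 - Γ.edge i 0 = (s1 - s0) • u := by
        rw [he0, he1, sub_smul]; abel
      rw [hdiff, smul_smul, div_mul_cancel₀ _ (by linarith : s1 - s0 ≠ 0), he0, het, sub_smul]
      abel
  -- determine the sign
  set ψ : Plane →L[ℝ] ℝ := ((q - p) 0) • EuclideanSpace.proj (0:Fin 2)
      + ((q - p) 1) • EuclideanSpace.proj 1 with hψdef
  have hψ : ∀ x : Plane, ψ x = (q - p) 0 * x 0 + (q - p) 1 * x 1 := by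
    intro x; simp [hψdef]
  have hu : q - p ≠ 0 := sub_ne_zero.2 (Ne.symm hpq)
  have hne : ∀ t ∈ Icc (0:ℝ) 1, ψ (d t) ≠ 0 := by
    intro t ht h0
    obtain ⟨c, hc0, hc⟩ := edge_parallel Γ i p q hpq himg t ht
    have hdt : d t = c • (q - p) := hc
    rw [hdt, hψ] at h0
    simp only [PiLp.smul_apply, smul_eq_mul] at h0
    have := plane_comp_pos hu
    apply hc0
    nlinarith
  have hconts : ContinuousOn (fun t => ψ (d t)) (Icc (0:ℝ) 1) :=
    ψ.continuous.comp_continuousOn hdcont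
  have hsign : (∀ t ∈ Icc (0:ℝ) 1, 0 < ψ (d t)) ∨ (∀ t ∈ Icc (0:ℝ) 1, ψ (d t) < 0) := by
    by_contra hc
    push_neg at hc
    obtain ⟨⟨t1, ht1, hle1⟩, t2, ht2, hle2⟩ := hc
    have hlt1 : ψ (d t1) < 0 := lt_of_le_of_ne hle1 (hne t1 ht1)
    have hlt2 : 0 < ψ (d t2) := lt_of_le_of_ne (by linarith [hle2]) (Ne.symm (hne t2 ht2))
    have hsub : uIcc t1 t2 ⊆ Icc (0:ℝ) 1 := by
      rw [show Icc (0:ℝ) 1 = uIcc (0:ℝ) 1 from (uIcc_of_le zero_le_one).symm]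
      exact uIcc_subset_uIcc (by rw [uIcc_of_le zero_le_one]; exact ht1)
        (by rw [uIcc_of_le zero_le_one]; exact ht2)
    have h0mem : (0:ℝ) ∈ uIcc (ψ (d t1)) (ψ (d t2)) := by
      rw [mem_uIcc]; left; exact ⟨le_of_lt hlt1, le_of_lt hlt2⟩
    obtain ⟨t0, ht0, hval⟩ := intermediate_value_uIcc (hconts.mono hsub) h0mem
    exact hne t0 (hsub ht0) hval
  rcases hsign with hpos | hneg
  · apply key p q hpq himg
    intro t ht
    have := hpos t ht
    rw [hψ] at this
    linarith
  · apply key q p (Ne.symm hpq) (himg.trans (segment_symm ℝ p q))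
    intro t ht
    have := hneg t ht
    rw [hψ] at this
    have e0 : (p - q) 0 = -((q - p) 0) := by simp
    have e1 : (p - q) 1 = -((q - p) 1) := by simp
    rw [e0, e1]
    linarith

lemma plane_decomp (x : Plane) :
    x = x 0 • EuclideanSpace.single (0 : Fin 2) (1:ℝ) + x 1 • EuclideanSpace.single 1 1 := by
  refine (Plane.ext' ?_ ?_).symm <;> simp [EuclideanSpace.single_apply]

lemma parity_lemma {n τ₁ τ₂ τ₃ : Plane} (h1 : ‖τ₁‖ = 1) (h2 : ‖τ₂‖ = 1) (h3 : ‖τ₃‖ = 1)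
    (hsum : τ₁ + τ₂ + τ₃ = 0)
    (hc1 : ∃ c : ℝ, τ₁ = c • n) (hc2 : ∃ c : ℝ, τ₂ = c • n) (hc3 : ∃ c : ℝ, τ₃ = c • n) :
    False := by
  obtain ⟨c₁, rfl⟩ := hc1; obtain ⟨c₂, rfl⟩ := hc2; obtain ⟨c₃, rfl⟩ := hc3
  rw [norm_smul] at h1 h2 h3
  have hn : ‖n‖ ≠ 0 := by intro h; rw [h] at h1; simp at h1
  have hn0 : n ≠ 0 := fun h => hn (by simp [h])
  have hs : (c₁ + c₂ + c₃) • n = 0 := by rw [add_smul, add_smul]; exact hsum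
  have hsum' : c₁ + c₂ + c₃ = 0 := by
    rcases smul_eq_zero.1 hs with h | h
    · exact h
    · exact absurd h hn0
  have hpos : (0:ℝ) < ‖n‖ := lt_of_le_of_ne (norm_nonneg n) (Ne.symm hn)
  have e1 : |c₁| = ‖n‖⁻¹ := by field_simp at h1 ⊢; rw [Real.norm_eq_abs] at h1; linarith
  have e2 : |c₂| = ‖n‖⁻¹ := by field_simp at h2 ⊢; rw [Real.norm_eq_abs] at h2; linarith
  have e3 : |c₃| = ‖n‖⁻¹ := by field_simp at h3 ⊢; rw [Real.norm_eq_abs] at h3; linarith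
  have hip : (0:ℝ) < ‖n‖⁻¹ := by positivity
  rcases abs_eq (le_of_lt hip) |>.1 e1 with g1 | g1 <;>
  rcases abs_eq (le_of_lt hip) |>.1 e2 with g2 | g2 <;>
  rcases abs_eq (le_of_lt hip) |>.1 e3 with g3 | g3 <;>
  rw [g1, g2, g3] at hsum' <;> linarith

lemma seg_diff {A B x y : Plane} (hx : x ∈ segment ℝ A B) (hy : y ∈ segment ℝ A B) :
    ∃ c : ℝ, y - x = c • (B - A) := by
  rw [segment_eq_image'] at hx hy
  obtain ⟨s, _, rfl⟩ := hx; obtain ⟨t, _, rfl⟩ := hy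
  exact ⟨t - s, by module⟩

lemma isClosed_seg (A B : Plane) : IsClosed (segment ℝ A B) := by
  rw [segment_eq_image']
  exact (isCompact_Icc.image (by continuity)).isClosed

lemma finsum_mem_triple {α M : Type*} [AddCommMonoid M] (f : α → M) {a b c : α}
    (hab : a ≠ b) (hac : a ≠ c) (hbc : b ≠ c) :
    ∑ᶠ x ∈ ({a, b, c} : Set α), f x = f a + f b + f c := by
  classical
  rw [show ({a, b, c} : Set α) = ↑({a, b, c} : Finset α) by simp, finsum_mem_coe_finset]
  rw [Finset.sum_insert (by simp [hab, hac]), Finset.sum_insert (by simp [hbc]),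
    Finset.sum_singleton, add_assoc]

lemma fiber_vertex (G : TopGraph N) {x : unitInterval × Fin N}
    (hx : TopGraph.IsVertexPoint x) :
    ∀ y ∈ G.fiber (G.proj x), TopGraph.IsVertexPoint y := by
  intro y hy
  have h : G.rel.r y x := Quotient.exact hy
  rcases G.rel_vertices y x h with rfl | ⟨hv, _⟩
  · exact hx
  · exact hv

lemma fiber_finite (G : TopGraph N) {p : G.space}
    (h : ∀ y ∈ G.fiber p, TopGraph.IsVertexPoint y) : (G.fiber p).Finite := by
  apply Set.Finite.subset (Set.Finite.prod
    ((Set.finite_singleton (1:unitInterval)).insert 0)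
    (Set.finite_univ (α := Fin N)))
  intro y hy
  rcases h y hy with h0 | h1
  · exact Set.mem_prod.2 ⟨by rw [h0]; exact Set.mem_insert _ _, mem_univ _⟩
  · exact Set.mem_prod.2 ⟨by rw [h1]; exact Set.mem_insert_iff.2 (Or.inr rfl), mem_univ _⟩

end NoMinAux

set_option maxHeartbeats 2000000
open NoMinAux

/-- There is no minimal network with exactly two endpoints and at least
one junction. -/
theorem no_minimal_network_with_two_endpoints_and_junction {N : ℕ} {G : TopGraph N}
    (Γ : Network N G) (hmin : Γ.IsMinimal)
    (h2 : {p : G.space | G.IsEndpoint p}.ncard = 2) :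
    ¬ ∃ m : G.space, G.IsJunction m := by
  rintro ⟨m, hm⟩
  classical
  obtain ⟨a, b, hab, hset⟩ := Set.ncard_eq_two.1 h2
  set A := Γ.toFun a with hA
  set B := Γ.toFun b with hB
  have hmfib : (G.fiber m).Nonempty := by
    rcases Set.eq_empty_or_nonempty (G.fiber m) with he | hne
    · exfalso; have h' := hm.2; rw [he] at h'; simp [Set.ncard_empty] at h'
    · exact hne
  obtain ⟨x₀, hx₀⟩ := hmfib
  haveI : Nonempty (Fin N) := ⟨x₀.2⟩
  have hedge0 : ∀ i : Fin N, Γ.edge i 0 = Γ.toFun (G.proj ((0:unitInterval), i)) := by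
    intro i; have h' := Γ.edge_eq i 0; simpa using h'
  have hedge1 : ∀ i : Fin N, Γ.edge i 1 = Γ.toFun (G.proj ((1:unitInterval), i)) := by
    intro i; have h' := Γ.edge_eq i 1; simpa using h'
  -- every vertex value lies on the segment [A, B]
  have hseg : ∀ x : unitInterval × Fin N, TopGraph.IsVertexPoint x →
      Γ.toFun (G.proj x) ∈ segment ℝ A B := by
    intro x hx
    by_contra hz
    obtain ⟨f, u, hfu, huz⟩ := geometric_hahn_banach_closed_point
      (convex_segment A B) (isClosed_seg A B) hz
    have hfA : f A < u := hfu A (left_mem_segment ℝ A B)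
    have hfB : f B < u := hfu B (right_mem_segment ℝ A B)
    obtain ⟨iM, -, hmax⟩ := Finset.exists_max_image Finset.univ
      (fun i => max (f (Γ.edge i 0)) (f (Γ.edge i 1))) Finset.univ_nonempty
    set M := max (f (Γ.edge iM 0)) (f (Γ.edge iM 1)) with hM
    have h0le : ∀ i, f (Γ.edge i 0) ≤ M :=
      fun i => le_trans (le_max_left _ _) (hmax i (Finset.mem_univ i))
    have h1le : ∀ i, f (Γ.edge i 1) ≤ M :=
      fun i => le_trans (le_max_right _ _) (hmax i (Finset.mem_univ i))
    have hstar : ∃ xM : unitInterval × Fin N, TopGraph.IsVertexPoint xM ∧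
        f (Γ.toFun (G.proj xM)) = M := by
      rcases max_cases (f (Γ.edge iM 0)) (f (Γ.edge iM 1)) with ⟨hc, -⟩ | ⟨hc, -⟩
      · exact ⟨((0:unitInterval), iM), Or.inl rfl, by rw [← hedge0 iM, hM]; exact hc.symm⟩
      · exact ⟨((1:unitInterval), iM), Or.inr rfl, by rw [← hedge1 iM, hM]; exact hc.symm⟩
    obtain ⟨xM, hxv, hxval⟩ := hstar
    have hfibv := fiber_vertex G hxv
    have hfibfin := fiber_finite G hfibv
    have hfibne : xM ∈ G.fiber (G.proj xM) := rfl
    have hvalfib : ∀ y ∈ G.fiber (G.proj xM), f (Γ.toFun (G.proj y)) = M := by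
      intro y hy
      rw [show G.proj y = G.proj xM from hy]
      exact hxval
    have hzle : f (Γ.toFun (G.proj x)) ≤ M := by
      rcases hx with h0 | h0
      · rw [show x = ((0:unitInterval), x.2) from Prod.ext h0 rfl, ← hedge0 x.2]
        exact h0le x.2
      · rw [show x = ((1:unitInterval), x.2) from Prod.ext h0 rfl, ← hedge1 x.2]
        exact h1le x.2
    by_cases h1 : (G.fiber (G.proj xM)).ncard = 1
    · -- the maximizer is an endpoint : contradiction with separation
      have hep : G.proj xM ∈ {p | G.IsEndpoint p} := ⟨hfibv, h1⟩
      rw [hset] at hep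
      rcases hep with h' | h'
      · rw [h'] at hxval; rw [← hA] at hxval; linarith
      · rw [h'] at hxval; rw [← hB] at hxval; linarith
    · -- the maximizer is a junction : contradiction with balance
      have hj : G.IsJunction (G.proj xM) := by
        refine ⟨hfibv, ?_⟩
        have hpos := (Set.ncard_pos hfibfin).2 ⟨xM, hfibne⟩
        omega
      have h3 : (G.fiber (G.proj xM)).ncard = 3 := hmin.junctions_order_three _ hj
      obtain ⟨y₁, y₂, y₃, h12, h13, h23, hfeq⟩ := Set.ncard_eq_three.1 h3
      have hsum := hmin.balanced _ hj
      rw [hfeq, finsum_mem_triple _ h12 h13 h23] at hsum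
      have hτ : ∀ y ∈ G.fiber (G.proj xM),
          ‖Γ.innerTangent y‖ = 1 ∧ f (Γ.innerTangent y) ≤ 0 := by
        intro y hy
        obtain ⟨w, L, hw1, hL, hτ0, hτ1, h10, -⟩ := edge_struct Γ hmin y.2
        rcases hfibv y hy with h0 | h0
        · have hyeq : y = ((0:unitInterval), y.2) := Prod.ext h0 rfl
          have hv0 : f (Γ.edge y.2 0) = M := by
            rw [hedge0 y.2, ← hyeq]
            exact hvalfib y hy
          have hv1 : f (Γ.edge y.2 1) ≤ M := h1le y.2
          rw [h10, map_add, map_smul, smul_eq_mul, hv0] at hv1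
          rw [hyeq, hτ0]
          exact ⟨hw1, by nlinarith⟩
        · have hyeq : y = ((1:unitInterval), y.2) := Prod.ext h0 rfl
          have hv1 : f (Γ.edge y.2 1) = M := by
            rw [hedge1 y.2, ← hyeq]
            exact hvalfib y hy
          have hv0 : f (Γ.edge y.2 0) ≤ M := h0le y.2
          rw [hyeq, hτ1]
          refine ⟨by rw [norm_neg]; exact hw1, ?_⟩
          rw [map_neg]
          have : f (Γ.edge y.2 0) = M - L * f w := by
            rw [← hv1, h10, map_add, map_smul, smul_eq_mul]; ring
          rw [this] at hv0
          nlinarith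
      have hy₁m : y₁ ∈ G.fiber (G.proj xM) := by rw [hfeq]; exact Or.inl rfl
      have hy₂m : y₂ ∈ G.fiber (G.proj xM) := by rw [hfeq]; exact Or.inr (Or.inl rfl)
      have hy₃m : y₃ ∈ G.fiber (G.proj xM) := by rw [hfeq]; exact Or.inr (Or.inr rfl)
      obtain ⟨hn1, hf1⟩ := hτ y₁ hy₁m
      obtain ⟨hn2, hf2⟩ := hτ y₂ hy₂m
      obtain ⟨hn3, hf3⟩ := hτ y₃ hy₃m
      have hfsum : f (Γ.innerTangent y₁) + f (Γ.innerTangent y₂) + f (Γ.innerTangent y₃) = 0 := by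
        rw [← map_add, ← map_add, hsum, map_zero]
      have hz1 : f (Γ.innerTangent y₁) = 0 := by linarith
      have hz2 : f (Γ.innerTangent y₂) = 0 := by linarith
      have hz3 : f (Γ.innerTangent y₃) = 0 := by linarith
      -- construct the kernel direction
      set w0 := f (EuclideanSpace.single (0:Fin 2) (1:ℝ)) with hw0def
      set w1 := f (EuclideanSpace.single (1:Fin 2) (1:ℝ)) with hw1def
      have hfcoord : ∀ v : Plane, f v = v 0 * w0 + v 1 * w1 := by
        intro v
        conv_lhs => rw [plane_decomp v]
        rw [map_add, map_smul, map_smul, smul_eq_mul, smul_eq_mul]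
      set n : Plane := (-w1) • EuclideanSpace.single (0:Fin 2) (1:ℝ)
        + w0 • EuclideanSpace.single (1:Fin 2) (1:ℝ) with hndef
      have hn0 : n 0 = -w1 := by simp [hndef, EuclideanSpace.single_apply]
      have hn1' : n 1 = w0 := by simp [hndef, EuclideanSpace.single_apply]
      have hnne : n ≠ 0 := by
        intro h
        have e0 : w1 = 0 := by
          have : n 0 = (0:Plane) 0 := by rw [h]
          rw [hn0] at this
          simpa using this
        have e1 : w0 = 0 := by
          have : n 1 = (0:Plane) 1 := by rw [h]
          rw [hn1'] at this
          simpa using this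
        have hzv : f (Γ.toFun (G.proj x)) = 0 := by rw [hfcoord, e0, e1]; ring
        have hAv : f A = 0 := by rw [hfcoord, e0, e1]; ring
        linarith
      have hpar : ∀ τ : Plane, f τ = 0 → ∃ c : ℝ, τ = c • n := by
        intro τ hτ0'
        apply det_parallel hnne
        rw [hn0, hn1']
        have := hfcoord τ
        rw [hτ0'] at this
        nlinarith [this]
      exact parity_lemma hn1 hn2 hn3 hsum (hpar _ hz1) (hpar _ hz2) (hpar _ hz3)
  -- now the junction m gives non-collinear directions : contradiction
  have h3 : (G.fiber m).ncard = 3 := hmin.junctions_order_three m hm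
  obtain ⟨y₁, y₂, y₃, h12, h13, h23, hfeq⟩ := Set.ncard_eq_three.1 h3
  have hsum := hmin.balanced m hm
  rw [hfeq, finsum_mem_triple _ h12 h13 h23] at hsum
  have hy₁m : y₁ ∈ G.fiber m := by rw [hfeq]; exact Or.inl rfl
  have hy₂m : y₂ ∈ G.fiber m := by rw [hfeq]; exact Or.inr (Or.inl rfl)
  have hy₃m : y₃ ∈ G.fiber m := by rw [hfeq]; exact Or.inr (Or.inr rfl)
  have hCm : Γ.toFun m ∈ segment ℝ A B := by
    have h' := hseg y₁ (hm.1 y₁ hy₁m)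
    rw [show G.proj y₁ = m from hy₁m] at h'
    exact h'
  have hnb : ∀ y ∈ G.fiber m, ‖Γ.innerTangent y‖ = 1 ∧
      ∃ L : ℝ, 0 < L ∧ Γ.toFun m + L • Γ.innerTangent y ∈ segment ℝ A B := by
    intro y hy
    obtain ⟨w, L, hw1, hL, hτ0, hτ1, h10, -⟩ := edge_struct Γ hmin y.2
    rcases hm.1 y hy with h0 | h0
    · have hyeq : y = ((0:unitInterval), y.2) := Prod.ext h0 rfl
      rw [hyeq, hτ0]
      refine ⟨hw1, L, hL, ?_⟩
      have hC : Γ.edge y.2 0 = Γ.toFun m := by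
        rw [hedge0 y.2, ← hyeq, show G.proj y = m from hy]
      have h' := hseg ((1:unitInterval), y.2) (Or.inr rfl)
      rw [← hedge1 y.2, h10, hC] at h'
      exact h'
    · have hyeq : y = ((1:unitInterval), y.2) := Prod.ext h0 rfl
      rw [hyeq, hτ1]
      refine ⟨by rw [norm_neg]; exact hw1, L, hL, ?_⟩
      have hC : Γ.edge y.2 1 = Γ.toFun m := by
        rw [hedge1 y.2, ← hyeq, show G.proj y = m from hy]
      have h' := hseg ((0:unitInterval), y.2) (Or.inl rfl)
      rw [← hedge0 y.2] at h'
      have heq : Γ.toFun m + L • -w = Γ.edge y.2 0 := by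
        rw [← hC, h10, smul_neg]
        abel
      rw [heq]
      exact h'
  obtain ⟨hn1, L₁, hL₁, hs1⟩ := hnb y₁ hy₁m
  obtain ⟨hn2, L₂, hL₂, hs2⟩ := hnb y₂ hy₂m
  obtain ⟨hn3, L₃, hL₃, hs3⟩ := hnb y₃ hy₃m
  have hdif : ∀ (L : ℝ), 0 < L → ∀ τ : Plane,
      Γ.toFun m + L • τ ∈ segment ℝ A B → ∃ c : ℝ, τ = c • (B - A) := by
    intro L hL τ hmem
    obtain ⟨c, hc⟩ := seg_diff hCm hmem
    rw [add_sub_cancel_left] at hc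
    refine ⟨c / L, ?_⟩
    have := congrArg (fun z : Plane => L⁻¹ • z) hc
    simp only [smul_smul] at this
    rw [inv_mul_cancel₀ (ne_of_gt hL), one_smul] at this
    rw [this, div_eq_inv_mul]
  exact parity_lemma hn1 hn2 hn3 hsum (hdif L₁ hL₁ _ hs1) (hdif L₂ hL₂ _ hs2)
    (hdif L₃ hL₃ _ hs3)
end
end

section
/- Let G be a connected simple graph and let a₁, a₂, a₃ be three distinct vertices of G. Then there exists a permutation (i, j, k) of (1, 2, 3) such that there exist a path in G from aᵢ to aⱼ not passing through aₖ, and a path in G from aᵢ to aₖ not passing through aⱼ. -/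
lemma split_path_avoiding {V : Type*} [DecidableEq V] {G : SimpleGraph V} {u v : V} (p : G.Walk u v)
    (hp : p.IsPath) {w : V} (hw : w ∈ p.support) (huw : u ≠ w) (hvw : v ≠ w) :
    ∃ (p₁ : G.Walk u w) (p₂ : G.Walk w v), p₁.IsPath ∧ p₂.IsPath ∧
      v ∉ p₁.support ∧ u ∉ p₂.support := by
  refine ⟨p.takeUntil w hw, p.dropUntil w hw, hp.takeUntil hw, hp.dropUntil hw, ?_, ?_⟩
  · intro hv
    have h1 : p.support = (p.takeUntil w hw).support ++ (p.dropUntil w hw).support.tail := by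
      conv_lhs => rw [← p.take_spec hw]
      exact SimpleGraph.Walk.support_append _ _
    have hnd := hp.support_nodup
    rw [h1, List.nodup_append] at hnd
    have hv2 : v ∈ (p.dropUntil w hw).support.tail := by
      have := (p.dropUntil w hw).end_mem_support
      rw [(p.dropUntil w hw).support_eq_cons] at this
      rcases List.mem_cons.mp this with h | h
      · exact absurd h hvw
      · exact h
    exact hnd.2.2 v hv v hv2 rfl
  · intro hu
    have h1 : p.support = (p.takeUntil w hw).support ++ (p.dropUntil w hw).support.tail := by
      conv_lhs => rw [← p.take_spec hw]
      exact SimpleGraph.Walk.support_append _ _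
    have hnd := hp.support_nodup
    rw [h1, List.nodup_append] at hnd
    have hu2 : u ∈ (p.dropUntil w hw).support.tail := by
      rw [(p.dropUntil w hw).support_eq_cons] at hu
      rcases List.mem_cons.mp hu with h | h
      · exact absurd h huw
      · exact h
    exact hnd.2.2 u (p.takeUntil w hw).start_mem_support u hu2 rfl

/-- In a connected simple graph, given three distinct vertices
`a 0, a 1, a 2`, there is a permutation `(i, j, k)` of `(0, 1, 2)` such that there are a
path from `a i` to `a j` avoiding `a k` and a path from `a i` to `a k` avoiding `a j`. -/
theorem exists_two_paths_avoiding_third {V : Type*} (G : SimpleGraph V)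
    (hconn : G.Connected) (a : Fin 3 → V) (hinj : Function.Injective a) :
    ∃ σ : Equiv.Perm (Fin 3),
      (∃ p : G.Walk (a (σ 0)) (a (σ 1)), p.IsPath ∧ a (σ 2) ∉ p.support) ∧
      (∃ q : G.Walk (a (σ 0)) (a (σ 2)), q.IsPath ∧ a (σ 1) ∉ q.support) := by
  classical
  have h01 : a 0 ≠ a 1 := fun h => absurd (hinj h) (by decide)
  have h02 : a 0 ≠ a 2 := fun h => absurd (hinj h) (by decide)
  have h12 : a 1 ≠ a 2 := fun h => absurd (hinj h) (by decide)
  -- path from a 1 to a 2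
  obtain ⟨P⟩ := hconn.preconnected (a 1) (a 2)
  obtain ⟨P, hP⟩ : ∃ P : G.Walk (a 1) (a 2), P.IsPath := ⟨P.toPath.1, P.toPath.2⟩
  by_cases h0 : a 0 ∈ P.support
  · -- split P at a 0 : take identity permutation
    obtain ⟨p₁, p₂, hp₁, hp₂, hv, hu⟩ :=
      split_path_avoiding P hP h0 h01.symm h02.symm
    exact ⟨Equiv.refl _, ⟨p₁.reverse, hp₁.reverse, by simpa using hv⟩,
      ⟨p₂, hp₂, by simpa using hu⟩⟩
  · -- path from a 0 to a 1
    obtain ⟨Q⟩ := hconn.preconnected (a 0) (a 1)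
    obtain ⟨Q, hQ⟩ : ∃ Q : G.Walk (a 0) (a 1), Q.IsPath := ⟨Q.toPath.1, Q.toPath.2⟩
    by_cases h2 : a 2 ∈ Q.support
    · -- split Q at a 2 : permutation 0↦2, 1↦0, 2↦1
      obtain ⟨q₁, q₂, hq₁, hq₂, hv, hu⟩ :=
        split_path_avoiding Q hQ h2 h02 h12
      refine ⟨Equiv.swap 0 2 * Equiv.swap 1 2, ?_, ?_⟩
      · have e0 : (Equiv.swap 0 2 * Equiv.swap 1 2 : Equiv.Perm (Fin 3)) 0 = 2 := by decide
        have e1 : (Equiv.swap 0 2 * Equiv.swap 1 2 : Equiv.Perm (Fin 3)) 1 = 0 := by decide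
        have e2 : (Equiv.swap 0 2 * Equiv.swap 1 2 : Equiv.Perm (Fin 3)) 2 = 1 := by decide
        rw [e0, e1, e2]
        exact ⟨q₁.reverse, hq₁.reverse, by simpa using hv⟩
      · have e0 : (Equiv.swap 0 2 * Equiv.swap 1 2 : Equiv.Perm (Fin 3)) 0 = 2 := by decide
        have e1 : (Equiv.swap 0 2 * Equiv.swap 1 2 : Equiv.Perm (Fin 3)) 1 = 0 := by decide
        have e2 : (Equiv.swap 0 2 * Equiv.swap 1 2 : Equiv.Perm (Fin 3)) 2 = 1 := by decide
        rw [e0, e1, e2]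
        exact ⟨q₂, hq₂, by simpa using hu⟩
    · -- permutation swap 0 1
      refine ⟨Equiv.swap 0 1, ?_, ?_⟩
      · have e0 : (Equiv.swap 0 1 : Equiv.Perm (Fin 3)) 0 = 1 := by decide
        have e1 : (Equiv.swap 0 1 : Equiv.Perm (Fin 3)) 1 = 0 := by decide
        have e2 : (Equiv.swap 0 1 : Equiv.Perm (Fin 3)) 2 = 2 := by decide
        rw [e0, e1, e2]
        exact ⟨Q.reverse, hQ.reverse, by simpa using h2⟩
      · have e0 : (Equiv.swap 0 1 : Equiv.Perm (Fin 3)) 0 = 1 := by decide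
        have e1 : (Equiv.swap 0 1 : Equiv.Perm (Fin 3)) 1 = 0 := by decide
        have e2 : (Equiv.swap 0 1 : Equiv.Perm (Fin 3)) 2 = 2 := by decide
        rw [e0, e1, e2]
        exact ⟨P, hP, h0⟩
end
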